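/- arXiv:2008.01031 — 4 statements merged into one kernel-verified Lean document; each statement's English description precedes it below -/
import Mathlib

section
/- For every 0 < β ≤ 1 there exists m₀ such that the following holds for every m ≥ m₀. There exists a bipartite graph B with vertex classes X_m ∪ Y_m and Z_m and maximum degree Δ(B) ≤ 100, such that |X_m| = m + ⌊βm⌋, |Y_m| = 2m and |Z_m| = 3m, and for every subset X'_m ⊆ X_m with |X'_m| = m, the induced bipartite graph B[X'_m ∪ Y_m, Z_m] contains a perfect matching. -/
open Finset Filter Topology

/-- All potential edges of a `k`-uniform hypergraph on `Fin n`. -/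
def allEdges (n k : ℕ) : Finset (Finset (Fin n)) :=
  Finset.powersetCard k Finset.univ

/-- Probability that the binomial random `k`-graph `H^{(k)}(n,p)` satisfies `P`. -/
noncomputable def rProb (n k : ℕ) (p : ℝ) (P : Finset (Finset (Fin n)) → Prop) : ℝ :=
  letI : DecidablePred P := fun E => Classical.propDecidable (P E)
  ∑ E ∈ (allEdges n k).powerset,
    if P E then p ^ E.card * (1 - p) ^ ((allEdges n k).card - E.card) else 0

/-- Expectation of `X` with respect to the binomial random `k`-graph `H^{(k)}(n,p)`. -/
noncomputable def rExp (n k : ℕ) (p : ℝ) (X : Finset (Finset (Fin n)) → ℝ) : ℝ :=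
  ∑ E ∈ (allEdges n k).powerset,
    p ^ E.card * (1 - p) ^ ((allEdges n k).card - E.card) * X E

/-- The degree of a vertex `v` in the hypergraph `H`. -/
def degH {n : ℕ} (H : Finset (Finset (Fin n))) (v : Fin n) : ℕ :=
  (H.filter fun e => v ∈ e).card

/-- The minimum vertex degree of `H`. -/
noncomputable def minDeg {n : ℕ} (H : Finset (Finset (Fin n))) : ℕ :=
  sInf { d : ℕ | ∃ v : Fin n, d = degH H v }

/-- `G` has a perfect matching. -/
def HasPerfectMatching {n : ℕ} (G : Finset (Finset (Fin n))) : Prop :=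
  ∃ M : Finset (Finset (Fin n)), M ⊆ G ∧
    (∀ e ∈ M, ∀ f ∈ M, e ≠ f → Disjoint e f) ∧ ∀ v : Fin n, ∃ e ∈ M, v ∈ e

/-- `f` is (the embedding of) a copy of `F` in `G`. -/
def IsCopyIn {b n : ℕ} (F : Finset (Finset (Fin b))) (G : Finset (Finset (Fin n)))
    (f : Fin b → Fin n) : Prop :=
  Function.Injective f ∧ ∀ e ∈ F, e.image f ∈ G

/-- The induced subgraph of `G` on `S` contains a copy of `F`. -/
def ContainsCopy {b n : ℕ} (F : Finset (Finset (Fin b))) (G : Finset (Finset (Fin n)))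
    (S : Finset (Fin n)) : Prop :=
  ∃ f : Fin b → Fin n, IsCopyIn F G f ∧ ∀ x, f x ∈ S

/-- `T` is a collection of pairwise vertex-disjoint copies of `F` in `G` whose vertex
sets partition `S`, i.e. an `F`-factor of the induced subgraph `G[S]`. -/
def IsFactorWitness {b n : ℕ} (F : Finset (Finset (Fin b))) (G : Finset (Finset (Fin n)))
    (S : Finset (Fin n)) (T : Finset (Fin b → Fin n)) : Prop :=
  (∀ f ∈ T, IsCopyIn F G f) ∧
  (∀ f ∈ T, ∀ g ∈ T, f ≠ g → Disjoint (Finset.univ.image f) (Finset.univ.image g)) ∧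
  T.biUnion (fun f => Finset.univ.image f) = S

/-- The induced subgraph `G[S]` has an `F`-factor. -/
def HasFactorOn {b n : ℕ} (F : Finset (Finset (Fin b))) (G : Finset (Finset (Fin n)))
    (S : Finset (Fin n)) : Prop :=
  ∃ T, IsFactorWitness F G S T

/-- `A` is an `(S,F)`-absorber in `H`. -/
def IsAbsorber {b n : ℕ} (F : Finset (Finset (Fin b))) (H : Finset (Finset (Fin n)))
    (S A : Finset (Fin n)) : Prop :=
  A.Nonempty ∧ Disjoint A S ∧ b ∣ A.card ∧ HasFactorOn F H A ∧ HasFactorOn F H (A ∪ S)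

/-- `A` is a simple `S`-absorber in `G`: `A` is a disjoint union of `b`-sets
`A₁, …, A_b`, with distinguished vertices `u i ∈ A i`, such that for some labelling
`s₁, …, s_b` of `S`, each `G[Aᵢ]` and each `G[{sᵢ} ∪ (Aᵢ \ {u i})]` contains a copy of
`F`, and `G[{u 1, …, u b}]` contains a copy of `F`. -/
def SimpleAbsorber {b n : ℕ} (F : Finset (Finset (Fin b))) (G : Finset (Finset (Fin n)))
    (S A : Finset (Fin n)) : Prop :=
  Disjoint A S ∧
  ∃ (Ai : Fin b → Finset (Fin n)) (u : Fin b → Fin n) (s : Fin b → Fin n),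
    Function.Injective s ∧ Finset.univ.image s = S ∧
    (∀ i, (Ai i).card = b) ∧ (∀ i, u i ∈ Ai i) ∧
    (∀ i j, i ≠ j → Disjoint (Ai i) (Ai j)) ∧
    Finset.univ.biUnion Ai = A ∧
    (∀ i, ContainsCopy F G (Ai i)) ∧
    (∀ i, ContainsCopy F G (insert (s i) ((Ai i).erase (u i)))) ∧
    ContainsCopy F G (Finset.univ.image u)

/-- `Φ_F(n,p) = min { n^{v_{F'}} p^{e_{F'}} : F' ⊆ F, e_{F'} > 0 }`, the minimum being
over all subgraphs `F'` of `F` (given by a vertex set `V' ⊆ Vset` and a nonempty edge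
set `E' ⊆ F` with all edges inside `V'`). -/
noncomputable def Phi {α : Type*} (Vset : Finset α) (F : Finset (Finset α)) (n : ℕ)
    (p : ℝ) : ℝ :=
  sInf { x : ℝ | ∃ (V' : Finset α) (E' : Finset (Finset α)), V' ⊆ Vset ∧ E' ⊆ F ∧
    E'.Nonempty ∧ (∀ e ∈ E', e ⊆ V') ∧ x = (n : ℝ) ^ V'.card * p ^ E'.card }

/-- `d*(F) = max { e_{F'}/(v_{F'} - 1) : F' ⊆ F, v_{F'} ≥ 2 }`. -/
noncomputable def dStar {α : Type*} (Vset : Finset α) (F : Finset (Finset α)) : ℝ :=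
  sSup { x : ℝ | ∃ (V' : Finset α) (E' : Finset (Finset α)), V' ⊆ Vset ∧ E' ⊆ F ∧
    (∀ e ∈ E', e ⊆ V') ∧ 2 ≤ V'.card ∧ x = (E'.card : ℝ) / ((V'.card : ℝ) - 1) }

/-- The number of embeddings of `F_v` (the spanning subgraph of `F` consisting of the
edges containing `v`) into `H` that map `v` to `w`. -/
noncomputable def embCount (k b : ℕ) (F : Finset (Finset (Fin b))) (v : Fin b) {n : ℕ}
    (H : Finset (Finset (Fin n))) (w : Fin n) : ℕ :=
  letI : DecidablePred (fun f : Fin b → Fin n =>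
      Function.Injective f ∧ f v = w ∧ ∀ e ∈ F, v ∈ e → e.image f ∈ H) :=
    fun f => Classical.propDecidable _
  (Finset.univ.filter fun f : Fin b → Fin n =>
    Function.Injective f ∧ f v = w ∧ ∀ e ∈ F, v ∈ e → e.image f ∈ H).card

/-- The set `Λ_{F,v}`. -/
def LambdaSet (k b : ℕ) (F : Finset (Finset (Fin b))) (v : Fin b) : Set ℝ :=
  { a : ℝ | 0 < a ∧ ∀ ε : ℝ, 0 < ε → ∃ ε' : ℝ, 0 < ε' ∧ ∃ n₀ : ℕ, ∀ n : ℕ, n₀ ≤ n →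
    ∀ H : Finset (Finset (Fin n)), (∀ e ∈ H, e.card = k) →
      (∀ u : Fin n, (a + ε) * ((n - 1).choose (k - 1) : ℝ) ≤ (degH H u : ℝ)) →
      ∀ w : Fin n, ε' * (n : ℝ) ^ (b - 1) ≤ (embCount k b F v H w : ℝ) }

/-- `α_F := min_{v ∈ V(F)} inf Λ_{F,v}`. -/
noncomputable def alphaF (k b : ℕ) (F : Finset (Finset (Fin b))) : ℝ :=
  ⨅ v : Fin b, sInf (LambdaSet k b F v)

/-- The `n`-vertex `k`-graph `H_n(A,B,η)`, whose edges are exactly the `k`-subsets of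
the vertex set meeting `A` (here `B` is the complement of `A`). -/
def Hgraph (n k : ℕ) (A : Finset (Fin n)) : Finset (Finset (Fin n)) :=
  (allEdges n k).filter fun e => (e ∩ A).Nonempty

/-- The link of `v` in `F`, a `(k-1)`-graph. -/
def linkAt {b : ℕ} (F : Finset (Finset (Fin b))) (v : Fin b) : Finset (Finset (Fin b)) :=
  (F.filter fun e => v ∈ e).image fun e => e.erase v

/-- The Turán number `ex(n, G)`: the maximum number of edges of a `k'`-graph on `n`
vertices containing no copy of `G`. -/
noncomputable def exNum (n k' : ℕ) {b : ℕ} (G : Finset (Finset (Fin b))) : ℕ :=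
  sSup { m : ℕ | ∃ H' : Finset (Finset (Fin n)), (∀ e ∈ H', e.card = k') ∧
    (¬ ∃ f : Fin b → Fin n, Function.Injective f ∧ ∀ e ∈ G, e.image f ∈ H') ∧
    m = H'.card }

/-- The number of ordered sets in `𝒜` spanning a labelled copy of `F` in `E`. -/
noncomputable def countSpan {s n : ℕ} (F : Finset (Finset (Fin s)))
    (𝒜 : Finset (Fin s → Fin n)) (E : Finset (Finset (Fin n))) : ℕ :=
  (𝒜.filter fun A => ∀ e ∈ F, e.image A ∈ E).card
namespace NPAux

open Finset Nat



/-- `(s+1)^s ≤ 3 * s^s` over ℝ. -/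
lemma succ_pow_le (s : ℕ) : ((s:ℝ) + 1) ^ s ≤ 3 * (s:ℝ) ^ s := by
  rcases Nat.eq_zero_or_pos s with h | h
  · subst h; norm_num
  · have hs : (0:ℝ) < s := by exact_mod_cast h
    have h1 : ((s:ℝ) + 1) = s * (1 + 1/s) := by field_simp
    have h2 : (1 + 1/(s:ℝ)) ^ s ≤ 3 := by
      have := Real.add_one_le_exp (1/(s:ℝ))
      have h3 : (1 + 1/(s:ℝ)) ^ s ≤ (Real.exp (1/s)) ^ s := by
        apply pow_le_pow_left₀ (by positivity) (by linarith)
      rw [← Real.exp_nat_mul] at h3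
      have : (s:ℝ) * (1/s) = 1 := by field_simp
      rw [this] at h3
      have := Real.exp_one_lt_d9
      linarith
    calc ((s:ℝ) + 1) ^ s = (s:ℝ)^s * (1 + 1/s)^s := by rw [h1, mul_pow]
    _ ≤ (s:ℝ)^s * 3 := by
        apply mul_le_mul_of_nonneg_left h2 (by positivity)
    _ = 3 * (s:ℝ)^s := by ring

/-- `s^s ≤ 3^s * s!` over ℕ. -/
lemma self_pow_le_factorial (s : ℕ) : s ^ s ≤ 3 ^ s * s ! := by
  have : ((s:ℝ)) ^ s ≤ 3 ^ s * (s ! : ℝ) := by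
    induction s with
    | zero => norm_num
    | succ n ih =>
      have h1 : ((n:ℝ) + 1) ^ (n+1) = ((n:ℝ)+1)^n * ((n:ℝ)+1) := by ring
      calc ((n+1:ℕ):ℝ) ^ (n+1) = ((n:ℝ)+1)^n * ((n:ℝ)+1) := by push_cast; ring
      _ ≤ (3 * (n:ℝ)^n) * ((n:ℝ)+1) := by
          apply mul_le_mul_of_nonneg_right (succ_pow_le n) (by positivity)
      _ ≤ (3 * (3^n * (n ! : ℝ))) * ((n:ℝ)+1) := by
          apply mul_le_mul_of_nonneg_right _ (by positivity)
          apply mul_le_mul_of_nonneg_left ih (by norm_num)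
      _ = 3^(n+1) * (((n+1:ℕ) * n ! : ℕ) : ℝ) := by push_cast; ring
      _ = 3^(n+1) * ((n+1)! : ℝ) := by rw [Nat.factorial_succ]
  exact_mod_cast this

/-- `choose a s * s^s ≤ 3^s * a^s`. -/
lemma choose_self_pow_le (a s : ℕ) : s ^ s * a.choose s ≤ 3 ^ s * a ^ s := by
  calc s ^ s * a.choose s = a.choose s * s ^ s := by ring
  _ ≤ a.choose s * (3 ^ s * s !) :=
        Nat.mul_le_mul_left _ (self_pow_le_factorial s)
  _ = 3 ^ s * (s ! * a.choose s) := by ring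
  _ ≤ 3 ^ s * a ^ s := by
      apply Nat.mul_le_mul_left
      rw [← Nat.descFactorial_eq_factorial_mul_choose]
      exact Nat.descFactorial_le_pow a s



lemma df_add (n i j : ℕ) :
    n.descFactorial (i + j) = n.descFactorial i * (n - i).descFactorial j := by
  induction j with
  | zero => simp
  | succ k ih =>
    rw [← Nat.add_assoc, Nat.descFactorial_succ, Nat.descFactorial_succ, ih,
      Nat.sub_sub]
    ring

lemma df_ratio (σ b s : ℕ) (h : σ ≤ b) :
    (2*σ).descFactorial s * b^s ≤ σ^s * (2*b).descFactorial s := by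
  rw [Nat.descFactorial_eq_prod_range, Nat.descFactorial_eq_prod_range]
  have hb : b^s = ∏ _i ∈ range s, b := by simp
  have hσ : σ^s = ∏ _i ∈ range s, σ := by simp
  rw [hb, hσ]
  rw [← Finset.prod_mul_distrib, ← Finset.prod_mul_distrib]
  apply Finset.prod_le_prod'
  intro i _
  rcases Nat.le_total (2*σ) i with hi | hi
  · have : 2*σ - i = 0 := by omega
    simp [this]
  · have e1 : σ * (2*b - i) = σ*(2*b) - σ*i := by
      rw [Nat.mul_sub]
    have e2 : (2*σ - i) * b = 2*σ*b - i*b := by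
      rw [Nat.sub_mul]
    rw [e1, e2]
    have : σ * (2*b) = 2*σ*b := by ring
    rw [this]
    apply Nat.sub_le_sub_left
    calc σ * i = i * σ := by ring
    _ ≤ i * b := Nat.mul_le_mul_left i h



lemma pow_self_pos (n : ℕ) : 0 < n ^ n := by
  rcases Nat.eq_zero_or_pos n with h | h
  · subst h; norm_num
  · exact pow_pos h n

/-- the main per-s numeric bound -/
lemma term_bound {a b cap s : ℕ} (H : 36*a*cap^23 ≤ b^24)
    (hs : 1 ≤ s) (hsc : s ≤ cap) (hcb : cap ≤ b) :
    a.choose s * b.choose (s-1) * (s-1)^(25*s) * 4^s ≤ b^(25*s) := by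
  set σ := s - 1 with hσdef
  have hσs : σ ≤ s := Nat.sub_le _ _
  have hσc : σ ≤ cap := le_trans hσs hsc
  have hσb : σ ≤ b := le_trans hσc hcb
  have hP : 0 < s ^ s * σ ^ σ := Nat.mul_pos (pow_self_pos s) (pow_self_pos σ)
  apply Nat.le_of_mul_le_mul_left _ hP
  -- expand σ^(25s)
  have hsplit : 25*s = 24*s + σ + (s - σ) := by omega
  have hsσ : s - σ = 1 := by omega
  have e1 : σ^(25*s) = (σ^24)^s * σ^σ * σ^(s-σ) := by
    rw [hsplit, pow_add, pow_add, ← pow_mul]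
  have A1 : s ^ s * a.choose s ≤ 3 ^ s * a ^ s := choose_self_pow_le a s
  have A2 : σ ^ σ * b.choose σ ≤ 3 ^ s * b ^ σ := by
    calc σ ^ σ * b.choose σ ≤ 3 ^ σ * b ^ σ := choose_self_pow_le b σ
    _ ≤ 3 ^ s * b ^ σ := Nat.mul_le_mul_right _ (Nat.pow_le_pow_right (by norm_num) hσs)
  have A4 : (σ^24)^s ≤ (cap^23 * s)^s := by
    apply Nat.pow_le_pow_left
    calc σ^24 = σ^23 * σ := by ring
    _ ≤ cap^23 * s := Nat.mul_le_mul (Nat.pow_le_pow_left hσc _) hσs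
  have A5 : σ^(s-σ) ≤ b^(s-σ) := Nat.pow_le_pow_left hσb _
  calc s ^ s * σ ^ σ * (a.choose s * b.choose σ * σ^(25*s) * 4^s)
      = (s ^ s * a.choose s) * (σ ^ σ * b.choose σ) * σ^(25*s) * 4^s := by ring
    _ ≤ (3 ^ s * a ^ s) * (3 ^ s * b ^ σ) * σ^(25*s) * 4^s := by
        apply Nat.mul_le_mul_right
        apply Nat.mul_le_mul_right
        exact Nat.mul_le_mul A1 A2
    _ = (3 ^ s * a ^ s) * (3 ^ s * b ^ σ) * ((σ^24)^s * σ^σ * σ^(s-σ)) * 4^s := by rw [e1]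
    _ ≤ (3 ^ s * a ^ s) * (3 ^ s * b ^ σ) * ((cap^23 * s)^s * σ^σ * b^(s-σ)) * 4^s := by
        apply Nat.mul_le_mul_right
        apply Nat.mul_le_mul_left
        exact Nat.mul_le_mul (Nat.mul_le_mul_right _ A4) A5
    _ = (36 * a * cap^23)^s * (b ^ σ * b^(s-σ)) * (s^s * σ^σ) := by
        have h36 : (36:ℕ)^s = 3^s*3^s*4^s := by
          rw [← mul_pow, ← mul_pow]; norm_num
        rw [mul_pow, mul_pow, mul_pow, h36]
        ring
    _ ≤ (b^24)^s * (b ^ σ * b^(s-σ)) * (s^s * σ^σ) := by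
        apply Nat.mul_le_mul_right
        apply Nat.mul_le_mul_right
        exact Nat.pow_le_pow_left H s
    _ = b^(24*s) * b^(σ + (s-σ)) * (s^s * σ^σ) := by rw [← pow_mul, ← pow_add]
    _ = s ^ s * σ ^ σ * b^(25*s) := by
        rw [← pow_add]
        have : 24*s + (σ + (s - σ)) = 25*s := by omega
        rw [this]
        ring



variable {α γ : Type*} [Fintype α] [Fintype γ] [DecidableEq α] [DecidableEq γ]

/-- Embeddings mapping all of `S` into `C`. -/
noncomputable def constrained (S : Finset α) (C : Finset γ) : Finset (α ↪ γ) :=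
  letI := Classical.decEq (α ↪ γ)
  (univ : Finset (α ↪ γ)).filter (fun g => ∀ x ∈ S, g x ∈ C)

lemma card_emb_coe (S : Finset α) (C : Finset γ) :
    Fintype.card (↥S ↪ ↥C) = C.card.descFactorial S.card := by
  rw [Fintype.card_embedding_eq, Fintype.card_coe, Fintype.card_coe]

lemma card_constrained_le (S : Finset α) (C : Finset γ) :
    (constrained S C).card ≤
      C.card.descFactorial S.card *
        (Fintype.card γ - S.card).descFactorial (Fintype.card α - S.card) := by
  classical
  set N := Fintype.card γ - S.card with hN
  -- the two target finsets
  set t1 : Finset (↥S → γ) :=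
    (univ : Finset (↥S ↪ ↥C)).image (fun e => fun x => (e x : γ)) with ht1
  set t2 : Finset ((↥(Sᶜ)) → ℕ) :=
    (univ : Finset (↥(Sᶜ) ↪ Fin N)).image (fun e => fun x => (e x : ℕ)) with ht2
  have hcard1 : t1.card ≤ C.card.descFactorial S.card := by
    calc t1.card ≤ (univ : Finset (↥S ↪ ↥C)).card := card_image_le
    _ = Fintype.card (↥S ↪ ↥C) := by rw [Finset.card_univ]
    _ = _ := card_emb_coe S C
  have hcard2 : t2.card ≤ N.descFactorial (Fintype.card α - S.card) := by
    calc t2.card ≤ (univ : Finset (↥(Sᶜ) ↪ Fin N)).card := card_image_le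
    _ = Fintype.card (↥(Sᶜ) ↪ Fin N) := by rw [Finset.card_univ]
    _ = N.descFactorial (Fintype.card α - S.card) := by
        rw [Fintype.card_embedding_eq, Fintype.card_fin, Fintype.card_coe,
          Finset.card_compl]
  -- the injection
  have key : (constrained S C).card ≤ (t1 ×ˢ t2).card := by
    refine Finset.card_le_card_of_injOn
      (fun g => (fun x : ↥S => g x.1,
        fun x : ↥(Sᶜ) =>
          if h : (g x.1 : γ) ∈ (S.image g)ᶜ then
            (((S.image g)ᶜ).equivFin ⟨g x.1, h⟩ : ℕ) else 0)) ?_ ?_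
    · -- maps into t1 ×ˢ t2
      intro g hg
      simp only [constrained, Finset.mem_filter] at hg
      have hgC : ∀ x ∈ S, g x ∈ C := (Finset.mem_filter.mp (Finset.mem_coe.mp hg)).2
      have himc : ∀ x : ↥(Sᶜ), (g x.1 : γ) ∈ (S.image g)ᶜ := by
        intro x
        rw [Finset.mem_compl]
        intro hmem
        rcases Finset.mem_image.mp hmem with ⟨y, hy, hxy⟩
        have := g.injective hxy
        subst this
        exact (Finset.mem_compl.mp x.2) hy
      rw [Finset.mem_coe, Finset.mem_product]
      constructor
      · rw [ht1, Finset.mem_image]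
        refine ⟨⟨fun x => ⟨g x.1, hgC x.1 x.2⟩, ?_⟩, Finset.mem_univ _, rfl⟩
        intro u v huv
        apply Subtype.ext
        exact g.injective (Subtype.ext_iff.mp huv)
      · rw [ht2, Finset.mem_image]
        have hDcard : ((S.image g)ᶜ).card = N := by
          rw [Finset.card_compl, Finset.card_image_of_injective _ g.injective]
        refine ⟨⟨fun x => (Fin.cast hDcard) (((S.image g)ᶜ).equivFin ⟨g x.1, himc x⟩), ?_⟩,
          Finset.mem_univ _, ?_⟩
        · intro u v huv
          have h2 := (Fin.cast_injective hDcard) huv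
          have h3 := ((S.image g)ᶜ).equivFin.injective h2
          have h4 : (g u.1 : γ) = g v.1 := Subtype.ext_iff.mp h3
          exact Subtype.ext (g.injective h4)
        · funext x
          simp only [Function.Embedding.coeFn_mk]
          rw [dif_pos (himc x)]
          rfl
    · -- injectivity on constrained
      intro g hg g' hg' heq
      have h1 : ∀ x ∈ S, g x = g' x := by
        intro x hx
        exact congrFun (congrArg Prod.fst heq) ⟨x, hx⟩
      have himg : S.image g = S.image g' := Finset.image_congr h1
      apply Function.Embedding.ext
      intro x
      by_cases hx : x ∈ S
      · exact h1 x hx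
      · have hxc : x ∈ Sᶜ := Finset.mem_compl.mpr hx
        have h2 := congrFun (congrArg Prod.snd heq) ⟨x, hxc⟩
        simp only at h2
        have himc : (g x : γ) ∈ (S.image g)ᶜ := by
          rw [Finset.mem_compl]
          intro hmem
          rcases Finset.mem_image.mp hmem with ⟨y, hy, hxy⟩
          exact hx (g.injective hxy ▸ hy)
        have himc' : (g' x : γ) ∈ (S.image g')ᶜ := by
          rw [Finset.mem_compl]
          intro hmem
          rcases Finset.mem_image.mp hmem with ⟨y, hy, hxy⟩
          exact hx (g'.injective hxy ▸ hy)
        rw [dif_pos himc, dif_pos himc'] at h2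
        have key : ∀ (D D' : Finset γ), D = D' → ∀ (u : γ) (hu : u ∈ D) (u' : γ)
            (hu' : u' ∈ D'), (D.equivFin ⟨u,hu⟩ : ℕ) = (D'.equivFin ⟨u',hu'⟩ : ℕ) →
            u = u' := by
          intro D D' hDD
          subst hDD
          intro u hu u' hu' h
          exact Subtype.ext_iff.mp (D.equivFin.injective (Fin.val_injective h))
        exact key _ _ (by rw [himg]) _ _ _ _ h2
  calc (constrained S C).card ≤ (t1 ×ˢ t2).card := key
  _ = t1.card * t2.card := Finset.card_product _ _
  _ ≤ _ := Nat.mul_le_mul hcard1 hcard2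



variable {α γ : Type*} [Fintype α] [Fintype γ] [DecidableEq α] [DecidableEq γ]

lemma mem_constrained {S : Finset α} {C : Finset γ} {g : α ↪ γ} :
    g ∈ constrained S C ↔ ∀ x ∈ S, g x ∈ C := by
  letI := Classical.decEq (α ↪ γ)
  simp [constrained]

lemma geom_quarter (n : ℕ) : ∑ s ∈ Icc 1 n, ((1:ℝ)/4)^s ≤ 1/3 := by
  have key : ∀ n : ℕ, ∑ s ∈ Icc 1 n, ((1:ℝ)/4)^s ≤ 1/3 - (1/3)*(1/4)^n := by
    intro n
    induction n with
    | zero => simp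
    | succ k ih =>
      rw [show Icc 1 (k+1) = insert (k+1) (Icc 1 k) from
        (Finset.insert_Icc_right_eq_Icc_add_one (by omega)).symm]
      rw [Finset.sum_insert (by simp)]
      have : ((1:ℝ)/4)^(k+1) = (1/4) * (1/4)^k := by ring
      rw [this]
      nlinarith [pow_pos (show (0:ℝ) < 1/4 by norm_num) k]
  calc ∑ s ∈ Icc 1 n, ((1:ℝ)/4)^s ≤ 1/3 - (1/3)*(1/4)^n := key n
  _ ≤ 1/3 := by nlinarith [pow_pos (show (0:ℝ) < 1/4 by norm_num) n]

section good

variable {β : Type*} [Fintype β] [DecidableEq β]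

/-- the neighbourhood of `S` under the 25 projected embeddings -/
def nbhd (f : Fin 25 → (α ↪ β × Fin 2)) (S : Finset α) : Finset β :=
  ((univ : Finset (Fin 25)) ×ˢ S).image (fun p => (f p.1 p.2).1)

theorem exists_good (cap : ℕ)
    (hab : Fintype.card α ≤ 2 * Fintype.card β)
    (hcap : cap ≤ Fintype.card β) (hcapa : cap ≤ Fintype.card α)
    (H : 36 * Fintype.card α * cap^23 ≤ (Fintype.card β)^24) :
    ∃ f : Fin 25 → (α ↪ β × Fin 2),
      ∀ S : Finset α, S.card ≤ cap → S.card ≤ (nbhd f S).card := by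
  classical
  by_contra hcon
  push_neg at hcon
  set a := Fintype.card α with ha
  set b := Fintype.card β with hb
  set Tot := (2*b).descFactorial a with hTot
  have hcardγ : Fintype.card (β × Fin 2) = 2*b := by
    rw [Fintype.card_prod, Fintype.card_fin]; ring
  have hTotcard : Fintype.card (α ↪ β × Fin 2) = Tot := by
    rw [Fintype.card_embedding_eq, hcardγ]
  -- covering
  have cover : (univ : Finset (Fin 25 → (α ↪ β × Fin 2))) ⊆
      (Icc 1 cap).biUnion (fun s =>
        ((powersetCard s (univ : Finset α)) ×ˢ (powersetCard (s-1) (univ : Finset β))).biUnion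
          (fun p => Fintype.piFinset (fun _ : Fin 25 =>
            constrained p.1 (p.2 ×ˢ (univ : Finset (Fin 2)))))) := by
    intro f _
    obtain ⟨S, hScap, hSbad⟩ := hcon f
    have hs1 : 1 ≤ S.card := by
      by_contra h
      push_neg at h
      interval_cases hS : S.card
      omega
    have harg1 : (nbhd f S).card ≤ S.card - 1 := by omega
    have harg2 : S.card - 1 ≤ (univ : Finset β).card := by
      rw [Finset.card_univ, ← hb]
      omega
    obtain ⟨W, hWsub, _, hWcard⟩ := Finset.exists_subsuperset_card_eq
      (Finset.subset_univ (nbhd f S)) harg1 harg2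
    rw [Finset.mem_biUnion]
    refine ⟨S.card, by rw [Finset.mem_Icc]; omega, ?_⟩
    rw [Finset.mem_biUnion]
    refine ⟨(S, W), ?_, ?_⟩
    · rw [Finset.mem_product]
      exact ⟨Finset.mem_powersetCard.mpr ⟨Finset.subset_univ _, rfl⟩,
        Finset.mem_powersetCard.mpr ⟨Finset.subset_univ _, hWcard⟩⟩
    · rw [Fintype.mem_piFinset]
      intro i
      rw [mem_constrained]
      intro x hx
      rw [Finset.mem_product]
      refine ⟨hWsub ?_, Finset.mem_univ _⟩
      exact Finset.mem_image.mpr ⟨(i, x), Finset.mem_product.mpr ⟨Finset.mem_univ _, hx⟩, rfl⟩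
  -- counting
  have count1 : Tot^25 ≤
      ∑ s ∈ Icc 1 cap, ∑ p ∈ (powersetCard s (univ : Finset α)) ×ˢ
          (powersetCard (s-1) (univ : Finset β)),
        (constrained p.1 (p.2 ×ˢ (univ : Finset (Fin 2)))).card ^ 25 := by
    have h1 : Tot^25 = (univ : Finset (Fin 25 → (α ↪ β × Fin 2))).card := by
      rw [Finset.card_univ, Fintype.card_fun, hTotcard, Fintype.card_fin]
    rw [h1]
    calc (univ : Finset (Fin 25 → (α ↪ β × Fin 2))).card
        ≤ _ := Finset.card_le_card cover
      _ ≤ ∑ s ∈ Icc 1 cap, (((powersetCard s (univ : Finset α)) ×ˢ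
            (powersetCard (s-1) (univ : Finset β))).biUnion
            (fun p => Fintype.piFinset (fun _ : Fin 25 =>
              constrained p.1 (p.2 ×ˢ (univ : Finset (Fin 2)))))).card :=
          Finset.card_biUnion_le
      _ ≤ _ := by
          apply Finset.sum_le_sum
          intro s _
          calc _ ≤ _ := Finset.card_biUnion_le
          _ ≤ _ := by
              apply Finset.sum_le_sum
              intro p _
              rw [Fintype.card_piFinset]
              rw [Finset.prod_const, Finset.card_univ, Fintype.card_fin]
  -- per-s bound
  have perS : ∀ s ∈ Icc 1 cap, ∀ p ∈ (powersetCard s (univ : Finset α)) ×ˢ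
      (powersetCard (s-1) (univ : Finset β)),
      (constrained p.1 (p.2 ×ˢ (univ : Finset (Fin 2)))).card ^ 25 * 4^s ≤
        ((2*(s-1)).descFactorial s * (2*b - s).descFactorial (a - s))^25 * 4^s := by
    intro s hs p hp
    apply Nat.mul_le_mul_right
    apply Nat.pow_le_pow_left
    rw [Finset.mem_product] at hp
    obtain ⟨hp1, hp2⟩ := hp
    have hS : p.1.card = s := (Finset.mem_powersetCard.mp hp1).2
    have hW : p.2.card = s - 1 := (Finset.mem_powersetCard.mp hp2).2
    have := card_constrained_le p.1 (p.2 ×ˢ (univ : Finset (Fin 2)))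
    rw [hS, hcardγ, Finset.card_product, hW, Finset.card_univ, Fintype.card_fin] at this
    calc _ ≤ _ := this
    _ = (2*(s-1)).descFactorial s * (2*b - s).descFactorial (a - s) := by
        rw [Nat.mul_comm (s-1) 2]
  -- the crucial arithmetic bound per s
  have key : ∀ s, 1 ≤ s → s ≤ cap →
      (a.choose s * b.choose (s-1)) *
        (((2*(s-1)).descFactorial s * (2*b - s).descFactorial (a - s))^25) * 4^s
        ≤ Tot^25 := by
    intro s hs1 hscap
    have hsb : s ≤ b := le_trans hscap hcap
    have hsa : s ≤ a := le_trans hscap hcapa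
    have hbpos : 0 < b := lt_of_lt_of_le hs1 hsb
    set σ := s - 1 with hσ
    set d₁ := (2*σ).descFactorial s with hd₁
    set d₂ := (2*b).descFactorial s with hd₂
    set D := (2*b - s).descFactorial (a - s) with hD
    have hTotsplit : Tot = d₂ * D := by
      rw [hTot, hd₂, hD, ← df_add]
      congr 1
      omega
    have hratio : d₁ * b^s ≤ σ^s * d₂ := df_ratio σ b s (by omega)
    have hratio25 : d₁^25 * (b^s)^25 ≤ (σ^s)^25 * d₂^25 := by
      calc d₁^25 * (b^s)^25 = (d₁ * b^s)^25 := by rw [mul_pow]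
      _ ≤ (σ^s * d₂)^25 := Nat.pow_le_pow_left hratio _
      _ = (σ^s)^25 * d₂^25 := by rw [mul_pow]
    have htb := term_bound (a := a) (b := b) (cap := cap) (s := s) H hs1 hscap hcap
    -- multiply out
    apply Nat.le_of_mul_le_mul_right _ (pow_pos hbpos (25*s))
    calc (a.choose s * b.choose σ) * ((d₁ * D)^25) * 4^s * b^(25*s)
        = (a.choose s * b.choose σ) * 4^s * (d₁^25 * (b^s)^25) * D^25 := by
          rw [mul_pow, ← pow_mul]
          ring
      _ ≤ (a.choose s * b.choose σ) * 4^s * ((σ^s)^25 * d₂^25) * D^25 := by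
          apply Nat.mul_le_mul_right
          apply Nat.mul_le_mul_left
          exact hratio25
      _ = (a.choose s * b.choose σ * σ^(25*s) * 4^s) * (d₂^25 * D^25) := by
          rw [← pow_mul]
          ring_nf
      _ ≤ b^(25*s) * (d₂^25 * D^25) := by
          apply Nat.mul_le_mul_right
          exact htb
      _ = Tot^25 * b^(25*s) := by
          rw [hTotsplit, mul_pow]
          ring
  -- sum it up in ℝ
  have hTotpos : 0 < Tot := by
    rw [hTot]
    rcases Nat.eq_zero_or_pos ((2*b).descFactorial a) with h | h
    · rw [Nat.descFactorial_eq_zero_iff_lt] at h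
      omega
    · exact h
  have final : (Tot:ℝ)^25 < (Tot:ℝ)^25 := by
    have hTR : (0:ℝ) < (Tot:ℝ)^25 := by positivity
    calc (Tot:ℝ)^25 ≤ ∑ s ∈ Icc 1 cap, ∑ p ∈ (powersetCard s (univ : Finset α)) ×ˢ
          (powersetCard (s-1) (univ : Finset β)),
          ((constrained p.1 (p.2 ×ˢ (univ : Finset (Fin 2)))).card : ℝ) ^ 25 := by
          exact_mod_cast count1
      _ ≤ ∑ s ∈ Icc 1 cap, (Tot:ℝ)^25 * (1/4)^s := by
          apply Finset.sum_le_sum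
          intro s hs
          rw [Finset.mem_Icc] at hs
          have step1 : ∑ p ∈ (powersetCard s (univ : Finset α)) ×ˢ
              (powersetCard (s-1) (univ : Finset β)),
              ((constrained p.1 (p.2 ×ˢ (univ : Finset (Fin 2)))).card : ℝ) ^ 25
              ≤ (a.choose s * b.choose (s-1) : ℝ) *
                (((2*(s-1)).descFactorial s * (2*b - s).descFactorial (a - s))^25 : ℕ) := by
            calc _ ≤ ∑ _p ∈ (powersetCard s (univ : Finset α)) ×ˢ
                (powersetCard (s-1) (univ : Finset β)),
                ((((2*(s-1)).descFactorial s * (2*b - s).descFactorial (a - s))^25 : ℕ) : ℝ) := by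
                  apply Finset.sum_le_sum
                  intro p hp
                  have hps := perS s (Finset.mem_Icc.mpr hs) p hp
                  have h4 : (0:ℕ) < 4^s := by positivity
                  have h5 := Nat.le_of_mul_le_mul_right hps h4
                  exact_mod_cast h5
              _ = _ := by
                  rw [Finset.sum_const, Finset.card_product,
                    Finset.card_powersetCard, Finset.card_powersetCard,
                    Finset.card_univ, Finset.card_univ, ← ha, ← hb]
                  push_cast
                  ring
          have hk := key s hs.1 hs.2
          have hkR : ((a.choose s * b.choose (s-1) : ℕ) : ℝ) *
              ((((2*(s-1)).descFactorial s * (2*b - s).descFactorial (a - s))^25 : ℕ) : ℝ) *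
              (4:ℝ)^s ≤ (Tot:ℝ)^25 := by
            push_cast
            exact_mod_cast key s hs.1 hs.2
          have h4R : (0:ℝ) < (4:ℝ)^s := by positivity
          calc ∑ p ∈ (powersetCard s (univ : Finset α)) ×ˢ
              (powersetCard (s-1) (univ : Finset β)),
              ((constrained p.1 (p.2 ×ˢ (univ : Finset (Fin 2)))).card : ℝ) ^ 25
              ≤ (a.choose s * b.choose (s-1) : ℝ) *
                (((2*(s-1)).descFactorial s * (2*b - s).descFactorial (a - s))^25 : ℕ) := step1
            _ ≤ (Tot:ℝ)^25 * (1/4)^s := by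
                rw [div_pow, one_pow, mul_one_div, le_div_iff₀ h4R]
                calc _ = ((a.choose s * b.choose (s-1) : ℕ) : ℝ) *
                    ((((2*(s-1)).descFactorial s * (2*b - s).descFactorial (a - s))^25 : ℕ) : ℝ) *
                    (4:ℝ)^s := by push_cast; ring
                  _ ≤ (Tot:ℝ)^25 := hkR
      _ = (Tot:ℝ)^25 * ∑ s ∈ Icc 1 cap, (1/4)^s := by rw [Finset.mul_sum]
      _ ≤ (Tot:ℝ)^25 * (1/3) := by
          apply mul_le_mul_of_nonneg_left (geom_quarter cap) (le_of_lt hTR)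
      _ < (Tot:ℝ)^25 := by nlinarith
  exact lt_irrefl _ final

end good


variable {α β : Type*} [Fintype α] [Fintype β] [DecidableEq α] [DecidableEq β]

/-- fibers of the 25 projected embeddings over a point are small -/
lemma fiber_le_50 (g : Fin 25 → (α ↪ β × Fin 2)) (y : β) :
    ((univ : Finset α).filter (fun z : α => ∃ i, (g i z).1 = y)).card ≤ 50 := by
  classical
  have : ((univ : Finset α).filter (fun z : α => ∃ i, (g i z).1 = y)).card ≤
      ((univ : Finset (Fin 25)) ×ˢ (({y} : Finset β) ×ˢ (univ : Finset (Fin 2)))).card := by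
    apply Finset.card_le_card_of_injOn
      (fun z => if h : ∃ i, (g i z).1 = y then (h.choose, g h.choose z)
        else ((0 : Fin 25), g 0 z))
    · intro z hz
      simp only [Finset.mem_coe] at hz ⊢
      rw [Finset.mem_filter] at hz
      rw [dif_pos hz.2]
      rw [Finset.mem_product]
      refine ⟨Finset.mem_univ _, ?_⟩
      rw [Finset.mem_product]
      exact ⟨Finset.mem_singleton.mpr hz.2.choose_spec, Finset.mem_univ _⟩
    · intro z hz z' hz' heq
      simp only [Finset.coe_filter, Set.mem_setOf_eq] at hz hz'
      simp only [dif_pos hz.2, dif_pos hz'.2] at heq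
      have h1 : hz.2.choose = hz'.2.choose := congrArg Prod.fst heq
      have h2 : g hz.2.choose z = g hz'.2.choose z' := congrArg Prod.snd heq
      rw [h1] at h2
      exact (g hz'.2.choose).injective h2
  calc _ ≤ _ := this
  _ ≤ 50 := by
    rw [Finset.card_product, Finset.card_product, Finset.card_univ, Finset.card_univ,
      Fintype.card_fin, Fintype.card_fin, Finset.card_singleton]


open NPAux


end NPAux

open NPAux Finset Nat in
/-- Lemma 3.2, Nenadov–Pehova. For every `0 < β ≤ 1` there exists
`m₀` such that for every `m ≥ m₀` there is a bipartite graph `B` with vertex classes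
`X_m ∪ Y_m` and `Z_m`, with `Δ(B) ≤ 100`, `|X_m| = m + ⌊βm⌋`, `|Y_m| = 2m`,
`|Z_m| = 3m`, such that for every `X'_m ⊆ X_m` with `|X'_m| = m`, the induced bipartite
graph `B[X'_m ∪ Y_m, Z_m]` has a perfect matching. -/
theorem template_bipartite_graph (β : ℝ) (hβ0 : 0 < β) (hβ1 : β ≤ 1) :
    ∃ m₀ : ℕ, ∀ m : ℕ, m₀ ≤ m →
      ∃ B : Finset ((Fin (m + ⌊β * (m : ℝ)⌋₊) ⊕ Fin (2 * m)) × Fin (3 * m)),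
        (∀ u : Fin (m + ⌊β * (m : ℝ)⌋₊) ⊕ Fin (2 * m),
          (B.filter fun e => e.1 = u).card ≤ 100) ∧
        (∀ z : Fin (3 * m), (B.filter fun e => e.2 = z).card ≤ 100) ∧
        ∀ X' : Finset (Fin (m + ⌊β * (m : ℝ)⌋₊)), X'.card = m →
          ∃ M ⊆ B,
            (∀ e ∈ M, ∀ x, e.1 = Sum.inl x → x ∈ X') ∧
            (∀ x ∈ X', ∃! e, e ∈ M ∧ e.1 = Sum.inl x) ∧
            (∀ y : Fin (2 * m), ∃! e, e ∈ M ∧ e.1 = Sum.inr y) ∧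
            (∀ z : Fin (3 * m), ∃! e, e ∈ M ∧ e.2 = z) := by
  classical
  refine ⟨1, fun m hm => ?_⟩
  set t := ⌊β * (m : ℝ)⌋₊ with htdef
  have htm : t ≤ m := by
    have h1 : β * (m:ℝ) ≤ ((m:ℕ):ℝ) := by nlinarith [Nat.cast_nonneg (α := ℝ) m]
    calc t = ⌊β * (m : ℝ)⌋₊ := htdef
    _ ≤ ⌊((m:ℕ) : ℝ)⌋₊ := Nat.floor_le_floor h1
    _ = m := Nat.floor_natCast m
  set X := Fin (m + t)
  set Y := Fin (2 * m)
  set L := (X ⊕ Y)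
  set Z := Fin (3 * m)
  have hcardL : Fintype.card L = 3 * m + t := by
    simp only [L, X, Y, Fintype.card_sum, Fintype.card_fin]
    omega
  have hcardZ : Fintype.card Z = 3 * m := by simp [Z]
  have hcardY : Fintype.card Y = 2 * m := by simp [Y]
  -- the two random families
  obtain ⟨θ, hθ⟩ := exists_good (α := L) (β := Z) (2 * m)
    (by rw [hcardL, hcardZ]; omega)
    (by rw [hcardZ]; omega)
    (by rw [hcardL]; omega)
    (by
      rw [hcardL, hcardZ]
      calc 36 * (3*m + t) * (2*m)^23 ≤ (144*m) * (2*m)^23 := by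
            apply Nat.mul_le_mul_right
            omega
      _ = 1207959552 * m^24 := by ring
      _ ≤ 282429536481 * m^24 := by
            apply Nat.mul_le_mul_right
            norm_num
      _ = (3*m)^24 := by ring)
  obtain ⟨ph, hph⟩ := exists_good (α := Z) (β := Y) m
    (by rw [hcardZ, hcardY]; omega)
    (by rw [hcardY]; omega)
    (by rw [hcardZ]; omega)
    (by
      rw [hcardZ, hcardY]
      calc 36 * (3*m) * m^23 = 108 * m^24 := by ring
      _ ≤ 16777216 * m^24 := by
            apply Nat.mul_le_mul_right
            norm_num
      _ = (2*m)^24 := by ring)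
  -- the graph
  set BΘ : Finset (L × Z) :=
    (univ : Finset (Fin 25 × L)).image (fun p => (p.2, (θ p.1 p.2).1)) with hBΘ
  set BΦ : Finset (L × Z) :=
    (univ : Finset (Fin 25 × Z)).image (fun p => (Sum.inr ((ph p.1 p.2).1), p.2)) with hBΦ
  refine ⟨BΘ ∪ BΦ, ?_, ?_, ?_⟩
  · -- left degrees
    intro u
    calc ((BΘ ∪ BΦ).filter fun e => e.1 = u).card
        ≤ ((BΘ.filter fun e => e.1 = u) ∪ (BΦ.filter fun e => e.1 = u)).card := by
          rw [← Finset.filter_union]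
      _ ≤ (BΘ.filter fun e => e.1 = u).card + (BΦ.filter fun e => e.1 = u).card :=
          Finset.card_union_le _ _
      _ ≤ 25 + 75 := by
          gcongr
          · -- Θ part ≤ 25
            calc (BΘ.filter fun e => e.1 = u).card
                ≤ ((univ : Finset (Fin 25)).image (fun i => (u, (θ i u).1))).card := by
                  apply Finset.card_le_card
                  intro e he
                  rw [Finset.mem_filter] at he
                  obtain ⟨he1, he2⟩ := he
                  rw [hBΘ, Finset.mem_image] at he1
                  obtain ⟨p, _, hp⟩ := he1
                  rw [Finset.mem_image]
                  refine ⟨p.1, Finset.mem_univ _, ?_⟩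
                  have : p.2 = u := by rw [← hp] at he2; exact he2
                  rw [← this, hp]
              _ ≤ 25 := le_trans Finset.card_image_le (by simp)
          · -- Φ part ≤ 75
            rcases u with x | y
            · -- inl: empty
              have : (BΦ.filter fun e => e.1 = Sum.inl x) = ∅ := by
                apply Finset.eq_empty_of_forall_notMem
                intro e he
                rw [Finset.mem_filter, hBΦ, Finset.mem_image] at he
                obtain ⟨⟨p, _, hp⟩, he2⟩ := he
                rw [← hp] at he2
                exact absurd he2 (by simp)
              rw [this]
              simp
            · -- inr y
              calc (BΦ.filter fun e => e.1 = Sum.inr y).card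
                  ≤ ((univ : Finset Z).filter
                      (fun z : Z => ∃ i, (ph i z).1 = y)).card := by
                    apply Finset.card_le_card_of_injOn (fun e => e.2)
                    · intro e he
                      simp only [Finset.mem_coe] at he ⊢
                      rw [Finset.mem_filter] at he
                      obtain ⟨he1, he2⟩ := he
                      rw [hBΦ, Finset.mem_image] at he1
                      obtain ⟨p, _, hp⟩ := he1
                      rw [Finset.mem_filter]
                      refine ⟨Finset.mem_univ _, ?_⟩
                      refine ⟨p.1, ?_⟩
                      have h2 : e.2 = p.2 := by rw [← hp]
                      rw [h2]
                      have := congrArg Prod.fst hp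
                      simp only at this
                      rw [he2] at this
                      exact Sum.inr_injective this
                    · intro e he e' he' heq
                      rw [Finset.coe_filter, Set.mem_setOf_eq] at he he'
                      have : e.1 = e'.1 := by rw [he.2, he'.2]
                      exact Prod.ext this heq
                _ ≤ 50 := fiber_le_50 ph y
                _ ≤ 75 := by omega
      _ = 100 := by norm_num
  · -- right degrees
    intro z
    calc ((BΘ ∪ BΦ).filter fun e => e.2 = z).card
        ≤ ((BΘ.filter fun e => e.2 = z) ∪ (BΦ.filter fun e => e.2 = z)).card := by
          rw [← Finset.filter_union]
      _ ≤ (BΘ.filter fun e => e.2 = z).card + (BΦ.filter fun e => e.2 = z).card :=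
          Finset.card_union_le _ _
      _ ≤ 75 + 25 := by
          gcongr
          · -- Θ part ≤ 75: edges (l, (θ i l).1 = z)
            calc (BΘ.filter fun e => e.2 = z).card
                ≤ ((univ : Finset L).filter
                    (fun l : L => ∃ i, (θ i l).1 = z)).card := by
                  apply Finset.card_le_card_of_injOn (fun e => e.1)
                  · intro e he
                    simp only [Finset.mem_coe] at he ⊢
                    rw [Finset.mem_filter] at he
                    obtain ⟨he1, he2⟩ := he
                    rw [hBΘ, Finset.mem_image] at he1
                    obtain ⟨p, _, hp⟩ := he1
                    rw [Finset.mem_filter]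
                    refine ⟨Finset.mem_univ _, p.1, ?_⟩
                    have h2 : e.1 = p.2 := by rw [← hp]
                    rw [h2]
                    have := congrArg Prod.snd hp
                    simp only at this
                    rw [he2] at this
                    exact this
                  · intro e he e' he' heq
                    rw [Finset.coe_filter, Set.mem_setOf_eq] at he he'
                    have : e.2 = e'.2 := by rw [he.2, he'.2]
                    exact Prod.ext heq this
              _ ≤ 50 := fiber_le_50 θ z
              _ ≤ 75 := by omega
          · calc (BΦ.filter fun e => e.2 = z).card
                ≤ ((univ : Finset (Fin 25)).image
                    (fun i => ((Sum.inr ((ph i z).1) : L), z))).card := by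
                  apply Finset.card_le_card
                  intro e he
                  rw [Finset.mem_filter] at he
                  obtain ⟨he1, he2⟩ := he
                  rw [hBΦ, Finset.mem_image] at he1
                  obtain ⟨p, _, hp⟩ := he1
                  rw [Finset.mem_image]
                  refine ⟨p.1, Finset.mem_univ _, ?_⟩
                  have : p.2 = z := by rw [← hp] at he2; exact he2
                  rw [← this, hp]
              _ ≤ 25 := le_trans Finset.card_image_le (by simp)
      _ = 100 := by norm_num
  · -- matchings
    intro X' hX'
    set allowed : Finset L := X'.image Sum.inl ∪ (univ : Finset Y).image Sum.inr
      with hallowed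
    have hallowedcard : allowed.card = 3 * m := by
      rw [hallowed, Finset.card_union_of_disjoint, Finset.card_image_of_injective _
        Sum.inl_injective, Finset.card_image_of_injective _ Sum.inr_injective,
        Finset.card_univ, hcardY, hX']
      · omega
      · rw [Finset.disjoint_left]
        rintro a ha hb
        rw [Finset.mem_image] at ha hb
        obtain ⟨x, _, hx⟩ := ha
        obtain ⟨y, _, hy⟩ := hb
        rw [← hx] at hy
        exact absurd hy (by simp)
    set nbr : Z → Finset L := fun z => allowed.filter (fun l => (l, z) ∈ BΘ ∪ BΦ)
      with hnbr
    have hsubY : ∀ A : Finset Z, (nbhd ph A).image Sum.inr ⊆ A.biUnion nbr := by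
      intro A y hy
      rw [Finset.mem_image] at hy
      obtain ⟨y', hy', hyy⟩ := hy
      rw [nbhd, Finset.mem_image] at hy'
      obtain ⟨p, hp, hpy⟩ := hy'
      rw [Finset.mem_product] at hp
      rw [Finset.mem_biUnion]
      refine ⟨p.2, hp.2, ?_⟩
      rw [hnbr, Finset.mem_filter]
      constructor
      · rw [← hyy, hallowed]
        apply Finset.mem_union_right
        exact Finset.mem_image.mpr ⟨y', Finset.mem_univ _, rfl⟩
      · apply Finset.mem_union_right
        rw [hBΦ, Finset.mem_image]
        refine ⟨p, Finset.mem_univ _, ?_⟩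
        rw [hpy, hyy]
    have hHall : ∀ A : Finset Z, A.card ≤ (A.biUnion nbr).card := by
      intro A
      rcases Nat.le_total A.card m with hA | hA
      · calc A.card ≤ (nbhd ph A).card := hph A hA
        _ = ((nbhd ph A).image Sum.inr).card :=
            (Finset.card_image_of_injective _ Sum.inr_injective).symm
        _ ≤ (A.biUnion nbr).card := Finset.card_le_card (hsubY A)
      · by_contra hlt
        push_neg at hlt
        obtain ⟨A', hA'sub, hA'card⟩ := Finset.exists_subset_card_eq hA
        have hm2 : m ≤ (A.biUnion nbr).card := by
          calc m = A'.card := hA'card.symm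
          _ ≤ (nbhd ph A').card := hph A' (le_of_eq hA'card)
          _ = ((nbhd ph A').image Sum.inr).card :=
              (Finset.card_image_of_injective _ Sum.inr_injective).symm
          _ ≤ (A'.biUnion nbr).card := Finset.card_le_card (hsubY A')
          _ ≤ (A.biUnion nbr).card := Finset.card_le_card
              (Finset.biUnion_subset_biUnion_of_subset_left _ hA'sub)
        set S : Finset L := allowed \ (A.biUnion nbr) with hS
        have hBsub : A.biUnion nbr ⊆ allowed := by
          intro l hl
          rw [Finset.mem_biUnion] at hl
          obtain ⟨z, _, hz⟩ := hl
          rw [hnbr, Finset.mem_filter] at hz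
          exact hz.1
        have hScard : S.card = 3*m - (A.biUnion nbr).card := by
          rw [hS, Finset.card_sdiff_of_subset hBsub, hallowedcard]
        have hAcard3m : A.card ≤ 3*m := by
          have h9 := Finset.card_le_univ A
          rwa [hcardZ] at h9
        have hgoodS : S.card ≤ (nbhd θ S).card := by
          apply hθ
          rw [hScard]
          omega
        have hdisj : nbhd θ S ⊆ (univ : Finset Z) \ A := by
          intro z hz
          rw [Finset.mem_sdiff]
          refine ⟨Finset.mem_univ _, ?_⟩
          intro hzA
          rw [nbhd, Finset.mem_image] at hz
          obtain ⟨p, hp, hpz⟩ := hz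
          rw [Finset.mem_product] at hp
          have hlS : p.2 ∈ S := hp.2
          rw [hS, Finset.mem_sdiff] at hlS
          apply hlS.2
          rw [Finset.mem_biUnion]
          refine ⟨z, hzA, ?_⟩
          rw [hnbr, Finset.mem_filter]
          refine ⟨hlS.1, ?_⟩
          apply Finset.mem_union_left
          rw [hBΘ, Finset.mem_image]
          exact ⟨p, Finset.mem_univ _, by rw [hpz]⟩
        have hfinal : (nbhd θ S).card ≤ 3*m - A.card := by
          calc (nbhd θ S).card ≤ ((univ : Finset Z) \ A).card :=
              Finset.card_le_card hdisj
          _ = 3*m - A.card := by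
              rw [Finset.card_sdiff_of_subset (Finset.subset_univ _), Finset.card_univ, hcardZ]
        omega
    obtain ⟨f, hfinj, hft⟩ :=
      (Finset.all_card_le_biUnion_card_iff_exists_injective nbr).mp hHall
    have hfallowed : ∀ z, f z ∈ allowed := by
      intro z
      have := hft z
      rw [hnbr, Finset.mem_filter] at this
      exact this.1
    have himgf : (univ : Finset Z).image f = allowed := by
      apply Finset.eq_of_subset_of_card_le
      · intro l hl
        rw [Finset.mem_image] at hl
        obtain ⟨z, _, hz⟩ := hl
        rw [← hz]; exact hfallowed z
      · rw [Finset.card_image_of_injective _ hfinj, Finset.card_univ, hcardZ,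
          hallowedcard]
    refine ⟨(univ : Finset Z).image (fun z => (f z, z)), ?_, ?_, ?_, ?_, ?_⟩
    · intro e he
      rw [Finset.mem_image] at he
      obtain ⟨z, _, hz⟩ := he
      have := hft z
      rw [hnbr, Finset.mem_filter] at this
      rw [← hz]
      exact this.2
    · intro e he x hex
      rw [Finset.mem_image] at he
      obtain ⟨z, _, hz⟩ := he
      have hfz : f z = Sum.inl x := by
        rw [← hz] at hex
        exact hex
      have := hfallowed z
      rw [hfz, hallowed, Finset.mem_union] at this
      rcases this with h | h
      · rw [Finset.mem_image] at h
        obtain ⟨x', hx', hxx⟩ := h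
        rwa [← Sum.inl_injective hxx]
      · rw [Finset.mem_image] at h
        obtain ⟨y, _, hy⟩ := h
        exact absurd hy (by simp)
    · intro x hx
      have : (Sum.inl x : L) ∈ allowed := by
        rw [hallowed]
        exact Finset.mem_union_left _ (Finset.mem_image.mpr ⟨x, hx, rfl⟩)
      rw [← himgf, Finset.mem_image] at this
      obtain ⟨z, _, hz⟩ := this
      refine ⟨(Sum.inl x, z), ⟨?_, rfl⟩, ?_⟩
      · rw [Finset.mem_image]
        exact ⟨z, Finset.mem_univ _, by rw [hz]⟩
      · rintro e' ⟨he', he'x⟩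
        rw [Finset.mem_image] at he'
        obtain ⟨z', _, hz'⟩ := he'
        have : f z' = Sum.inl x := by rw [← hz'] at he'x; exact he'x
        have hzz : z' = z := hfinj (by rw [this, hz])
        rw [← hz', hzz, hz]
    · intro y
      have : (Sum.inr y : L) ∈ allowed := by
        rw [hallowed]
        exact Finset.mem_union_right _ (Finset.mem_image.mpr ⟨y, Finset.mem_univ _, rfl⟩)
      rw [← himgf, Finset.mem_image] at this
      obtain ⟨z, _, hz⟩ := this
      refine ⟨(Sum.inr y, z), ⟨?_, rfl⟩, ?_⟩
      · rw [Finset.mem_image]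
        exact ⟨z, Finset.mem_univ _, by rw [hz]⟩
      · rintro e' ⟨he', he'y⟩
        rw [Finset.mem_image] at he'
        obtain ⟨z', _, hz'⟩ := he'
        have : f z' = Sum.inr y := by rw [← hz'] at he'y; exact he'y
        have hzz : z' = z := hfinj (by rw [this, hz])
        rw [← hz', hzz, hz]
    · intro z
      refine ⟨(f z, z), ⟨Finset.mem_image.mpr ⟨z, Finset.mem_univ _, rfl⟩, rfl⟩, ?_⟩
      rintro e' ⟨he', he'z⟩
      rw [Finset.mem_image] at he'
      obtain ⟨z', _, hz'⟩ := he'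
      have : z' = z := by rw [← hz'] at he'z; exact he'z
      rw [← hz', this]
end

section
/- Let F be a k-graph with at least one edge. For every θ > 0 there is a constant c = c(θ,F) > 0 such that if p = p(n) ≤ c·n^{−1/d*(F)}, then the probability that H^{(k)}(n,p) contains an F-tiling covering at least θn vertices tends to 0 as n → ∞. -/
open Finset Filter Topology

lemma sum_weights {γ : Type*} [DecidableEq γ] (A : Finset γ) (p : ℝ) :
    ∑ E ∈ A.powerset, p ^ E.card * (1 - p) ^ (A.card - E.card) = 1 := by
  calc ∑ E ∈ A.powerset, p ^ E.card * (1 - p) ^ (A.card - E.card)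
      = ∑ t ∈ A.powerset, (∏ _i ∈ t, p) * ∏ _i ∈ A \ t, (1 - p) := by
        apply Finset.sum_congr rfl
        intro t ht
        rw [Finset.prod_const, Finset.prod_const,
          Finset.card_sdiff_of_subset (Finset.mem_powerset.mp ht)]
    _ = ∏ i ∈ A, (p + (1 - p)) := (Finset.prod_add _ _ _).symm
    _ = 1 := by simp

lemma rProb_nonneg (n k : ℕ) (p : ℝ) (hp0 : 0 ≤ p) (hp1 : p ≤ 1)
    (P : Finset (Finset (Fin n)) → Prop) : 0 ≤ rProb n k p P := by
  have h1 : (0:ℝ) ≤ 1 - p := by linarith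
  unfold rProb
  apply Finset.sum_nonneg
  intro E _
  split
  · positivity
  · exact le_refl 0

lemma rProb_eq_sum_filter (n k : ℕ) (p : ℝ) (P : Finset (Finset (Fin n)) → Prop)
    [DecidablePred P] :
    rProb n k p P = ∑ E ∈ (allEdges n k).powerset.filter P,
      p ^ E.card * (1 - p) ^ ((allEdges n k).card - E.card) := by
  unfold rProb
  rw [Finset.sum_filter]
  apply Finset.sum_congr rfl
  intro E _
  by_cases h : P E <;> simp [h]

lemma prob_superset (n k : ℕ) (p : ℝ) (W : Finset (Finset (Fin n)))
    (hW : W ⊆ allEdges n k) :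
    rProb n k p (fun E => W ⊆ E) = p ^ W.card := by
  classical
  set A := allEdges n k with hA
  rw [rProb_eq_sum_filter]
  have hset : A.powerset.filter (fun E => W ⊆ E)
      = (A \ W).powerset.image (fun E' => E' ∪ W) := by
    ext E
    simp only [Finset.mem_filter, Finset.mem_powerset, Finset.mem_image]
    constructor
    · rintro ⟨h1, h2⟩
      refine ⟨E \ W, Finset.sdiff_subset_sdiff h1 le_rfl, Finset.sdiff_union_of_subset h2⟩
    · rintro ⟨E', hE', rfl⟩
      exact ⟨Finset.union_subset (hE'.trans Finset.sdiff_subset) hW, Finset.subset_union_right⟩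
  have hinj : Set.InjOn (fun E' => E' ∪ W) ((A \ W).powerset : Set (Finset (Finset (Fin n)))) := by
    intro E₁ h₁ E₂ h₂ h
    simp only [Finset.coe_powerset, Set.mem_preimage, Set.mem_powerset_iff] at h₁ h₂
    have d₁ : Disjoint E₁ W := Finset.disjoint_of_subset_left (by exact_mod_cast h₁) Finset.sdiff_disjoint
    have d₂ : Disjoint E₂ W := Finset.disjoint_of_subset_left (by exact_mod_cast h₂) Finset.sdiff_disjoint
    have := congrArg (fun s => s \ W) h
    simpa [Finset.union_sdiff_cancel_right d₁, Finset.union_sdiff_cancel_right d₂] using this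
  rw [hset, Finset.sum_image (fun x hx y hy h => hinj (by exact_mod_cast hx) (by exact_mod_cast hy) h)]
  have hcardA : W.card ≤ A.card := Finset.card_le_card hW
  calc ∑ E' ∈ (A \ W).powerset, p ^ (E' ∪ W).card * (1 - p) ^ (A.card - (E' ∪ W).card)
      = ∑ E' ∈ (A \ W).powerset, p ^ W.card * (p ^ E'.card * (1 - p) ^ ((A \ W).card - E'.card)) := by
        apply Finset.sum_congr rfl
        intro E' hE'
        have hsub : E' ⊆ A \ W := Finset.mem_powerset.mp hE'
        have hd : Disjoint E' W := Finset.disjoint_of_subset_left hsub Finset.sdiff_disjoint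
        have hc : (E' ∪ W).card = E'.card + W.card := Finset.card_union_of_disjoint hd
        have hle : E'.card ≤ (A \ W).card := Finset.card_le_card hsub
        have hsd : (A \ W).card = A.card - W.card := Finset.card_sdiff_of_subset hW
        rw [hc]
        have : A.card - (E'.card + W.card) = (A \ W).card - E'.card := by omega
        rw [this, pow_add]
        ring
    _ = p ^ W.card := by
        rw [← Finset.mul_sum, sum_weights]
        ring

lemma rProb_mono_sum {n k : ℕ} {p : ℝ} (hp0 : 0 ≤ p) (hp1 : p ≤ 1)
    (P : Finset (Finset (Fin n)) → Prop) {ι : Type*} (I : Finset ι)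
    (Q : ι → Finset (Finset (Fin n)) → Prop)
    (h : ∀ E, P E → ∃ i ∈ I, Q i E) :
    rProb n k p P ≤ ∑ i ∈ I, rProb n k p (Q i) := by
  classical
  have h1 : (0:ℝ) ≤ 1 - p := by linarith
  unfold rProb
  rw [Finset.sum_comm]
  apply Finset.sum_le_sum
  intro E _
  by_cases hPE : P E
  · rw [if_pos hPE]
    obtain ⟨i₀, hi₀, hQ⟩ := h E hPE
    calc p ^ E.card * (1 - p) ^ ((allEdges n k).card - E.card)
        = if Q i₀ E then p ^ E.card * (1 - p) ^ ((allEdges n k).card - E.card) else 0 := by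
          rw [if_pos hQ]
      _ ≤ ∑ i ∈ I, if Q i E then p ^ E.card * (1 - p) ^ ((allEdges n k).card - E.card) else 0 := by
          apply Finset.single_le_sum (fun i _ => ?_) hi₀
          split
          · positivity
          · exact le_refl 0
  · rw [if_neg hPE]
    apply Finset.sum_nonneg
    intro i _
    split
    · positivity
    · exact le_refl 0


def mapEdge {b : ℕ} (V₀ : Finset (Fin b)) {n : ℕ} (g : {x // x ∈ V₀} → Fin n)
    (e : Finset (Fin b)) : Finset (Fin n) :=
  (V₀.attach.filter fun x => x.1 ∈ e).image g

noncomputable def edgesOf {b : ℕ} (V₀ : Finset (Fin b)) (E₀ : Finset (Finset (Fin b)))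
    {n : ℕ} (𝒮 : Finset ({x // x ∈ V₀} → Fin n)) : Finset (Finset (Fin n)) :=
  𝒮.biUnion fun g => E₀.image (mapEdge V₀ g)

open Classical in
noncomputable def goodFams {b : ℕ} (V₀ : Finset (Fin b)) (n m : ℕ) :
    Finset (Finset ({x // x ∈ V₀} → Fin n)) :=
  (Finset.univ.powersetCard m).filter fun 𝒮 =>
    (∀ g ∈ 𝒮, Function.Injective g) ∧
    ∀ g ∈ 𝒮, ∀ g' ∈ 𝒮, g ≠ g' → Disjoint (Finset.univ.image g) (Finset.univ.image g')

lemma mapEdge_eq_image {b n : ℕ} (V₀ : Finset (Fin b)) (f : Fin b → Fin n)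
    {e : Finset (Fin b)} (he : e ⊆ V₀) :
    mapEdge V₀ (fun x => f x.1) e = e.image f := by
  ext y
  simp only [mapEdge, Finset.mem_image, Finset.mem_filter, Finset.mem_attach, true_and]
  constructor
  · rintro ⟨⟨a, ha⟩, h1, h2⟩; exact ⟨a, h1, h2⟩
  · rintro ⟨a, h1, h2⟩; exact ⟨⟨a, he h1⟩, h1, h2⟩

lemma mapEdge_card {b n : ℕ} (V₀ : Finset (Fin b)) {g : {x // x ∈ V₀} → Fin n}
    (hg : Function.Injective g) {e : Finset (Fin b)} (he : e ⊆ V₀) :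
    (mapEdge V₀ g e).card = e.card := by
  rw [mapEdge, Finset.card_image_of_injective _ hg]
  have himg : ((V₀.attach.filter fun x => x.1 ∈ e).image Subtype.val) = e := by
    ext a
    simp only [Finset.mem_image, Finset.mem_filter, Finset.mem_attach, true_and]
    constructor
    · rintro ⟨⟨x, hx⟩, h1, rfl⟩; exact h1
    · intro ha; exact ⟨⟨a, he ha⟩, ha, rfl⟩
  rw [← Finset.card_image_of_injective (V₀.attach.filter fun x => x.1 ∈ e) Subtype.val_injective, himg]

lemma mapEdge_subset {b n : ℕ} (V₀ : Finset (Fin b)) (g : {x // x ∈ V₀} → Fin n)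
    (e : Finset (Fin b)) : mapEdge V₀ g e ⊆ Finset.univ.image g := by
  intro y hy
  simp only [mapEdge, Finset.mem_image] at hy ⊢
  obtain ⟨x, _, rfl⟩ := hy
  exact ⟨x, Finset.mem_univ x, rfl⟩

lemma mapEdge_nonempty {b n : ℕ} (V₀ : Finset (Fin b)) (g : {x // x ∈ V₀} → Fin n)
    {e : Finset (Fin b)} (hne : e.Nonempty) (he : e ⊆ V₀) :
    (mapEdge V₀ g e).Nonempty := by
  obtain ⟨a, ha⟩ := hne
  exact ⟨g ⟨a, he ha⟩, Finset.mem_image_of_mem _ (by simp [ha])⟩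

lemma mapEdge_injOn {b n : ℕ} (V₀ : Finset (Fin b)) {g : {x // x ∈ V₀} → Fin n}
    (hg : Function.Injective g) {E₀ : Finset (Finset (Fin b))}
    (hsub : ∀ e ∈ E₀, e ⊆ V₀) : Set.InjOn (mapEdge V₀ g) E₀ := by
  have key : ∀ {e e' : Finset (Fin b)}, e ⊆ V₀ → e' ⊆ V₀ →
      mapEdge V₀ g e = mapEdge V₀ g e' → e ⊆ e' := by
    intro e e' he he' hEq x hx
    have hmem : g ⟨x, he hx⟩ ∈ mapEdge V₀ g e :=
      Finset.mem_image_of_mem _ (by simp [hx])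
    rw [hEq] at hmem
    simp only [mapEdge, Finset.mem_image, Finset.mem_filter, Finset.mem_attach,
      true_and] at hmem
    obtain ⟨y, hy, hgy⟩ := hmem
    have := hg hgy
    rw [this] at hy
    exact hy
  intro e₁ h₁ e₂ h₂ heq
  exact Finset.Subset.antisymm (key (hsub _ h₁) (hsub _ h₂) heq)
    (key (hsub _ h₂) (hsub _ h₁) heq.symm)

lemma card_edgesOf {b n : ℕ} (V₀ : Finset (Fin b)) (E₀ : Finset (Finset (Fin b)))
    (hsub : ∀ e ∈ E₀, e ⊆ V₀) (hne : ∀ e ∈ E₀, e.Nonempty) {m : ℕ}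
    {𝒮 : Finset ({x // x ∈ V₀} → Fin n)} (h𝒮 : 𝒮 ∈ goodFams V₀ n m) :
    (edgesOf V₀ E₀ 𝒮).card = m * E₀.card := by
  classical
  simp only [goodFams, Finset.mem_filter, Finset.mem_powersetCard] at h𝒮
  obtain ⟨⟨-, hcard⟩, hinj, hdisj⟩ := h𝒮
  rw [edgesOf, Finset.card_biUnion]
  · rw [Finset.sum_congr rfl (fun g hg =>
      Finset.card_image_of_injOn (mapEdge_injOn V₀ (hinj g hg) hsub))]
    rw [Finset.sum_const, smul_eq_mul, hcard]
  · intro g hg g' hg' hgg'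
    rw [Function.onFun, Finset.disjoint_left]
    intro w hw hw'
    simp only [Finset.mem_image] at hw hw'
    obtain ⟨e, he, rfl⟩ := hw
    obtain ⟨e', he', heq⟩ := hw'
    obtain ⟨y, hy⟩ := mapEdge_nonempty V₀ g (hne e he) (hsub e he)
    have hy1 : y ∈ Finset.univ.image g := mapEdge_subset V₀ g e hy
    have hy2 : y ∈ Finset.univ.image g' := by
      apply mapEdge_subset V₀ g' e'
      rw [heq]; exact hy
    exact Finset.disjoint_left.mp (hdisj g hg g' hg' hgg') hy1 hy2

lemma edgesOf_subset_allEdges {k b n : ℕ} (V₀ : Finset (Fin b))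
    (E₀ : Finset (Finset (Fin b))) (hsub : ∀ e ∈ E₀, e ⊆ V₀)
    (hcard : ∀ e ∈ E₀, e.card = k) {m : ℕ}
    {𝒮 : Finset ({x // x ∈ V₀} → Fin n)} (h𝒮 : 𝒮 ∈ goodFams V₀ n m) :
    edgesOf V₀ E₀ 𝒮 ⊆ allEdges n k := by
  classical
  simp only [goodFams, Finset.mem_filter, Finset.mem_powersetCard] at h𝒮
  obtain ⟨-, hinj, -⟩ := h𝒮
  intro w hw
  simp only [edgesOf, Finset.mem_biUnion, Finset.mem_image] at hw
  obtain ⟨g, hg, e, he, rfl⟩ := hw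
  rw [allEdges, Finset.mem_powersetCard]
  exact ⟨Finset.subset_univ _, by rw [mapEdge_card V₀ (hinj g hg) (hsub e he)]; exact hcard e he⟩

lemma goodFams_card_le {b : ℕ} (V₀ : Finset (Fin b)) (n m : ℕ) :
    (goodFams V₀ n m).card ≤ (n ^ V₀.card).choose m := by
  have h1 : (goodFams V₀ n m).card ≤
      ((Finset.univ : Finset ({x // x ∈ V₀} → Fin n)).powersetCard m).card := by
    rw [goodFams]
    apply Finset.card_le_card
    intro x hx
    simp only [Finset.mem_filter] at hx
    exact hx.1
  rwa [Finset.card_powersetCard, Finset.card_univ, Fintype.card_fun,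
    Fintype.card_fin, Fintype.card_coe] at h1

lemma extract {b n : ℕ} (F : Finset (Finset (Fin b))) (V₀ : Finset (Fin b))
    (E₀ : Finset (Finset (Fin b))) (hE₀F : E₀ ⊆ F) (hsub : ∀ e ∈ E₀, e ⊆ V₀)
    (hV₀ : V₀.Nonempty) (E : Finset (Finset (Fin n))) (T : Finset (Fin b → Fin n))
    (m : ℕ) (h1 : ∀ f ∈ T, IsCopyIn F E f)
    (h2 : ∀ f ∈ T, ∀ g ∈ T, f ≠ g → Disjoint (Finset.univ.image f) (Finset.univ.image g))
    (hm : m ≤ T.card) :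
    ∃ 𝒮 ∈ goodFams V₀ n m, edgesOf V₀ E₀ 𝒮 ⊆ E := by
  classical
  obtain ⟨T', hT'sub, hT'card⟩ := Finset.exists_subset_card_eq hm
  obtain ⟨x₀, hx₀⟩ := hV₀
  set r : (Fin b → Fin n) → ({x // x ∈ V₀} → Fin n) := fun f x => f x.1 with hr
  have hinjOn : Set.InjOn r T' := by
    intro f hf g hg hrfg
    by_contra hne
    have hfg : f x₀ = g x₀ := congrFun hrfg ⟨x₀, hx₀⟩
    have h1' : f x₀ ∈ Finset.univ.image f := Finset.mem_image_of_mem f (Finset.mem_univ x₀)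
    have h2' : f x₀ ∈ Finset.univ.image g := by
      rw [hfg]; exact Finset.mem_image_of_mem g (Finset.mem_univ x₀)
    exact Finset.disjoint_left.mp (h2 f (hT'sub hf) g (hT'sub hg) hne) h1' h2'
  have himsub : ∀ f : Fin b → Fin n, Finset.univ.image (r f) ⊆ Finset.univ.image f := by
    intro f y hy
    simp only [Finset.mem_image] at hy ⊢
    obtain ⟨x, -, rfl⟩ := hy
    exact ⟨x.1, Finset.mem_univ _, rfl⟩
  refine ⟨T'.image r, ?_, ?_⟩
  · simp only [goodFams, Finset.mem_filter, Finset.mem_powersetCard]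
    refine ⟨⟨Finset.subset_univ _, by rw [Finset.card_image_of_injOn hinjOn, hT'card]⟩, ?_, ?_⟩
    · intro g hg
      obtain ⟨f, hf, rfl⟩ := Finset.mem_image.mp hg
      intro x y hxy
      exact Subtype.ext ((h1 f (hT'sub hf)).1 hxy)
    · intro g₁ hg₁ g₂ hg₂ hne
      obtain ⟨f₁, hf₁, rfl⟩ := Finset.mem_image.mp hg₁
      obtain ⟨f₂, hf₂, rfl⟩ := Finset.mem_image.mp hg₂
      have hfne : f₁ ≠ f₂ := by rintro rfl; exact hne rfl
      exact Finset.disjoint_of_subset_left (himsub f₁)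
        (Finset.disjoint_of_subset_right (himsub f₂)
          (h2 f₁ (hT'sub hf₁) f₂ (hT'sub hf₂) hfne))
  · intro w hw
    simp only [edgesOf, Finset.mem_biUnion, Finset.mem_image] at hw
    obtain ⟨g, ⟨f, hf, rfl⟩, e, he, rfl⟩ := hw
    rw [show r f = fun x => f x.1 from rfl, mapEdge_eq_image V₀ f (hsub e he)]
    exact (h1 f (hT'sub hf)).2 e (hE₀F he)


lemma aux_pow_div_factorial_le (t : ℕ) :
    ((t : ℝ) / 4) ^ t / (Nat.factorial t : ℝ) ≤ (Real.exp 1 / 4) ^ t := by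
  have ht : (0:ℝ) ≤ t := Nat.cast_nonneg t
  have hfact : (0:ℝ) < (Nat.factorial t : ℝ) := by exact_mod_cast Nat.factorial_pos t
  have hterm : (t:ℝ) ^ t / (Nat.factorial t : ℝ) ≤ Real.exp t := by
    calc (t:ℝ) ^ t / (Nat.factorial t : ℝ)
        ≤ ∑ i ∈ Finset.range (t+1), (t:ℝ) ^ i / (Nat.factorial i : ℝ) :=
          Finset.single_le_sum (f := fun i => (t:ℝ) ^ i / (Nat.factorial i : ℝ))
            (fun i _ => by positivity) (Finset.self_mem_range_succ t)
      _ ≤ Real.exp t := Real.sum_le_exp_of_nonneg ht (t+1)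
  have hexp : Real.exp (t:ℝ) = Real.exp 1 ^ t := by
    rw [← Real.exp_nat_mul]; norm_num
  calc ((t : ℝ) / 4) ^ t / (Nat.factorial t : ℝ)
      = ((t:ℝ) ^ t / (Nat.factorial t : ℝ)) / 4 ^ t := by rw [div_pow]; ring
    _ ≤ Real.exp t / 4 ^ t := by gcongr
    _ = (Real.exp 1 / 4) ^ t := by rw [hexp, div_pow]

lemma aux_choose_le (N t : ℕ) : (N.choose t : ℝ) * (Nat.factorial t : ℝ) ≤ (N:ℝ) ^ t := by
  have h : N.choose t * Nat.factorial t ≤ N ^ t := by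
    rw [mul_comm, ← Nat.descFactorial_eq_factorial_mul_choose]
    exact Nat.descFactorial_le_pow N t
  exact_mod_cast h


/-- Proposition 3.1. Let `F` be a `k`-graph with at least one edge.
For every `θ > 0` there is `c = c(θ,F) > 0` such that if `p = p(n) ≤ c n^{-1/d*(F)}`,
then a.a.s. `H^{(k)}(n,p)` contains no `F`-tiling covering at least `θn` vertices. -/
theorem no_large_tiling
    (k : ℕ) (hk : 2 ≤ k) (b : ℕ) (F : Finset (Finset (Fin b)))
    (hF : ∀ e ∈ F, e.card = k) (hFne : F.Nonempty) (θ : ℝ) (hθ : 0 < θ) :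
    ∃ c : ℝ, 0 < c ∧ ∀ p : ℕ → ℝ,
      (∀ n : ℕ, 0 ≤ p n ∧ p n ≤ 1 ∧
        p n ≤ c * (n : ℝ) ^ (-(1 / dStar (Finset.univ : Finset (Fin b)) F))) →
      Tendsto
        (fun n : ℕ => rProb n k (p n) fun E =>
          ∃ T : Finset (Fin b → Fin n),
            (∀ f ∈ T, IsCopyIn F E f) ∧
            (∀ f ∈ T, ∀ g ∈ T, f ≠ g →
              Disjoint (Finset.univ.image f) (Finset.univ.image g)) ∧
            θ * n ≤ ((T.biUnion fun f => Finset.univ.image f).card : ℝ))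
        atTop (𝓝 0) := by
  classical
  set d := dStar (Finset.univ : Finset (Fin b)) F with hd
  set S : Set ℝ := { x : ℝ | ∃ (V' : Finset (Fin b)) (E' : Finset (Finset (Fin b))),
    V' ⊆ (Finset.univ : Finset (Fin b)) ∧ E' ⊆ F ∧
    (∀ e ∈ E', e ⊆ V') ∧ 2 ≤ V'.card ∧ x = (E'.card : ℝ) / ((V'.card : ℝ) - 1) } with hS
  have hdS : d = sSup S := rfl
  obtain ⟨e₀, he₀⟩ := hFne
  have hke : e₀.card = k := hF e₀ he₀
  have hkb : k ≤ b := by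
    have h1 : e₀.card ≤ (Finset.univ : Finset (Fin b)).card :=
      Finset.card_le_card (Finset.subset_univ e₀)
    rwa [hke, Finset.card_univ, Fintype.card_fin] at h1
  have hk1 : (1:ℝ) ≤ (k:ℝ) - 1 := by
    have : (2:ℝ) ≤ (k:ℝ) := by exact_mod_cast hk
    linarith
  have hx₀mem : (1:ℝ)/((k:ℝ)-1) ∈ S := by
    refine ⟨e₀, {e₀}, Finset.subset_univ _, Finset.singleton_subset_iff.mpr he₀,
      ?_, by rw [hke]; exact hk, ?_⟩
    · intro e hee
      rw [Finset.mem_singleton] at hee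
      subst hee; exact subset_rfl
    · rw [Finset.card_singleton, hke]; norm_num
  have hSfin : S.Finite := by
    apply Set.Finite.subset (Set.finite_range
      (fun q : Finset (Fin b) × Finset (Finset (Fin b)) =>
        ((q.2.card : ℝ) / ((q.1.card : ℝ) - 1))))
    rintro x ⟨V', E', -, -, -, -, rfl⟩
    exact ⟨(V', E'), rfl⟩
  have hSne : S.Nonempty := ⟨_, hx₀mem⟩
  have hdpos : 0 < d := by
    have h0 : (0:ℝ) < (1:ℝ)/((k:ℝ)-1) := div_pos one_pos (by linarith)
    exact lt_of_lt_of_le h0 (hdS ▸ le_csSup hSfin.bddAbove hx₀mem)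
  have hdmem : d ∈ S := hdS ▸ hSne.csSup_mem hSfin
  obtain ⟨V₀, E₀, -, hE₀F, hsub, hv2, hdeq⟩ := hdmem
  have hv1 : (1:ℝ) ≤ (V₀.card:ℝ) - 1 := by
    have : (2:ℝ) ≤ (V₀.card:ℝ) := by exact_mod_cast hv2
    linarith
  have hE₀pos : 0 < E₀.card := by
    rcases Nat.eq_zero_or_pos E₀.card with h0 | h
    · rw [h0] at hdeq
      simp at hdeq
      rw [hdeq] at hdpos
      norm_num at hdpos
    · exact h
  have hV₀ne : V₀.Nonempty := Finset.card_pos.mp (by omega)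
  have hbpos : 0 < b := by omega
  have hbR : (0:ℝ) < (b:ℝ) := by exact_mod_cast hbpos
  have hEcard : ∀ e ∈ E₀, e.card = k := fun e he => hF e (hE₀F he)
  have hEne : ∀ e ∈ E₀, e.Nonempty := fun e he =>
    Finset.card_pos.mp (by rw [hEcard e he]; omega)
  set c : ℝ := min 1 (θ/(4*b)) with hc
  have hcpos : 0 < c := lt_min one_pos (by positivity)
  refine ⟨c, hcpos, ?_⟩
  intro p hp
  set m : ℕ → ℕ := fun n => ⌈θ * n / b⌉₊ with hm
  set q : ℝ := Real.exp 1 / 4 with hq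
  have hq0 : 0 ≤ q := by positivity
  have hq1 : q < 1 := by
    rw [hq, div_lt_one (by norm_num : (0:ℝ) < 4)]
    calc Real.exp 1 < 2.7182818286 := Real.exp_one_lt_d9
      _ < 4 := by norm_num
  have key : ∀ n : ℕ, 1 ≤ n →
      rProb n k (p n) (fun E =>
        ∃ T : Finset (Fin b → Fin n),
          (∀ f ∈ T, IsCopyIn F E f) ∧
          (∀ f ∈ T, ∀ g ∈ T, f ≠ g →
            Disjoint (Finset.univ.image f) (Finset.univ.image g)) ∧
          θ * n ≤ ((T.biUnion fun f => Finset.univ.image f).card : ℝ)) ≤ q ^ m n := by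
    intro n hn1
    obtain ⟨hp0, hp1, hple⟩ := hp n
    have hn0 : (0:ℝ) < (n:ℝ) := by exact_mod_cast hn1
    set t := m n with ht
    set e' := E₀.card with he'
    set v' := V₀.card with hv'
    -- Step A: union bound
    have hA : rProb n k (p n) (fun E =>
        ∃ T : Finset (Fin b → Fin n),
          (∀ f ∈ T, IsCopyIn F E f) ∧
          (∀ f ∈ T, ∀ g ∈ T, f ≠ g →
            Disjoint (Finset.univ.image f) (Finset.univ.image g)) ∧
          θ * n ≤ ((T.biUnion fun f => Finset.univ.image f).card : ℝ)) ≤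
        ∑ 𝒮 ∈ goodFams V₀ n t, rProb n k (p n) (fun E => edgesOf V₀ E₀ 𝒮 ⊆ E) := by
      apply rProb_mono_sum hp0 hp1
      intro E hPE
      obtain ⟨T, h1, h2, h3⟩ := hPE
      have hcardT : (T.biUnion fun f => Finset.univ.image f).card ≤ T.card * b := by
        calc (T.biUnion fun f => Finset.univ.image f).card
            ≤ ∑ f ∈ T, (Finset.univ.image f).card := Finset.card_biUnion_le
          _ ≤ ∑ f ∈ T, b := Finset.sum_le_sum fun f _ =>
              le_trans Finset.card_image_le (by simp)
          _ = T.card * b := by rw [Finset.sum_const, smul_eq_mul]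
      have hmT : t ≤ T.card := by
        apply Nat.ceil_le.mpr
        rw [div_le_iff₀ hbR]
        calc θ * n ≤ ((T.biUnion fun f => Finset.univ.image f).card : ℝ) := h3
          _ ≤ (T.card : ℝ) * b := by exact_mod_cast hcardT
      exact extract F V₀ E₀ hE₀F hsub hV₀ne E T t h1 h2 hmT
    -- Step B: compute each probability
    have hB : ∑ 𝒮 ∈ goodFams V₀ n t, rProb n k (p n) (fun E => edgesOf V₀ E₀ 𝒮 ⊆ E)
        = ((goodFams V₀ n t).card : ℝ) * (p n) ^ (t * e') := by
      rw [Finset.sum_congr rfl (fun 𝒮 h𝒮 => by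
        rw [prob_superset n k (p n) _ (edgesOf_subset_allEdges V₀ E₀ hsub hEcard h𝒮),
          card_edgesOf V₀ E₀ hsub hEne h𝒮]), Finset.sum_const, nsmul_eq_mul]
    -- counting families
    have hCount : ((goodFams V₀ n t).card : ℝ) ≤ ((n ^ v').choose t : ℝ) := by
      exact_mod_cast goodFams_card_le V₀ n t
    -- the density estimate
    have h1d : (1/d) * (E₀.card:ℝ) = (V₀.card:ℝ) - 1 := by
      rw [hdeq]
      have hED : ((E₀.card:ℝ)) ≠ 0 := by positivity
      have hVD : ((V₀.card:ℝ) - 1) ≠ 0 := by linarith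
      field_simp
      rw [he', hv']; ring
    have hrp : (p n) ^ e' ≤ c ^ e' * (n:ℝ) ^ ((1:ℝ) - (v':ℝ)) := by
      calc (p n) ^ e' ≤ (c * (n:ℝ) ^ (-(1/d))) ^ e' := pow_le_pow_left₀ hp0 hple e'
        _ = c ^ e' * ((n:ℝ) ^ (-(1/d))) ^ (e' : ℕ) := mul_pow _ _ _
        _ = c ^ e' * (n:ℝ) ^ ((-(1/d)) * (e':ℝ)) := by
            rw [← Real.rpow_natCast ((n:ℝ) ^ (-(1/d))) e', ← Real.rpow_mul hn0.le]
        _ = c ^ e' * (n:ℝ) ^ ((1:ℝ) - (v':ℝ)) := by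
            rw [show (-(1/d)) * (e':ℝ) = (1:ℝ) - (v':ℝ) by rw [neg_mul, h1d]; ring]
    have hnp : (n:ℝ) ^ v' * (p n) ^ e' ≤ (t:ℝ)/4 := by
      have hstep1 : (n:ℝ) ^ v' * (p n) ^ e' ≤ c ^ e' * (n:ℝ) := by
        calc (n:ℝ) ^ v' * (p n) ^ e'
            ≤ (n:ℝ) ^ v' * (c ^ e' * (n:ℝ) ^ ((1:ℝ) - (v':ℝ))) :=
              mul_le_mul_of_nonneg_left hrp (by positivity)
          _ = c ^ e' * ((n:ℝ) ^ ((v':ℝ)) * (n:ℝ) ^ ((1:ℝ) - (v':ℝ))) := by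
              rw [← Real.rpow_natCast (n:ℝ) v']; ring
          _ = c ^ e' * (n:ℝ) := by
              rw [← Real.rpow_add hn0, show (v':ℝ) + ((1:ℝ) - (v':ℝ)) = 1 by ring,
                Real.rpow_one]
      have hce : c ^ e' ≤ θ/(4*b) := by
        calc c ^ e' ≤ c := pow_le_of_le_one hcpos.le (min_le_left _ _) (by omega)
          _ ≤ θ/(4*b) := min_le_right _ _
      have hstep2 : c ^ e' * (n:ℝ) ≤ θ/(4*b) * n := mul_le_mul_of_nonneg_right hce hn0.le
      have hmge : θ * n / b ≤ (t:ℝ) := Nat.le_ceil _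
      have heq4 : θ/(4*b) * (n:ℝ) = (θ * n / b)/4 := by field_simp
      calc (n:ℝ) ^ v' * (p n) ^ e' ≤ θ/(4*b) * n := le_trans hstep1 hstep2
        _ = (θ * n / b)/4 := heq4
        _ ≤ (t:ℝ)/4 := by linarith
    -- final chain
    have hfact : (0:ℝ) < (Nat.factorial t : ℝ) := by exact_mod_cast Nat.factorial_pos t
    have hbase0 : 0 ≤ (n:ℝ) ^ v' * (p n) ^ e' := by positivity
    calc rProb n k (p n) (fun E =>
        ∃ T : Finset (Fin b → Fin n),
          (∀ f ∈ T, IsCopyIn F E f) ∧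
          (∀ f ∈ T, ∀ g ∈ T, f ≠ g →
            Disjoint (Finset.univ.image f) (Finset.univ.image g)) ∧
          θ * n ≤ ((T.biUnion fun f => Finset.univ.image f).card : ℝ))
        ≤ ((goodFams V₀ n t).card : ℝ) * (p n) ^ (t * e') := le_of_le_of_eq hA hB
      _ ≤ ((n ^ v').choose t : ℝ) * (p n) ^ (t * e') :=
          mul_le_mul_of_nonneg_right hCount (by positivity)
      _ = ((n ^ v').choose t : ℝ) * ((p n) ^ e') ^ t := by
          rw [mul_comm t e', pow_mul]
      _ ≤ (((n:ℝ) ^ v') ^ t / (Nat.factorial t : ℝ)) * ((p n) ^ e') ^ t := by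
          apply mul_le_mul_of_nonneg_right _ (by positivity)
          rw [le_div_iff₀ hfact]
          calc ((n ^ v').choose t : ℝ) * (Nat.factorial t : ℝ)
              ≤ ((n ^ v' : ℕ) : ℝ) ^ t := aux_choose_le _ _
            _ = ((n:ℝ) ^ v') ^ t := by push_cast; ring
      _ = ((n:ℝ) ^ v' * (p n) ^ e') ^ t / (Nat.factorial t : ℝ) := by
          rw [mul_pow]; ring
      _ ≤ ((t:ℝ)/4) ^ t / (Nat.factorial t : ℝ) := by
          gcongr
      _ ≤ q ^ t := aux_pow_div_factorial_le t
  -- conclude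
  have hmt : Tendsto m atTop atTop := by
    apply Filter.tendsto_atTop_atTop.mpr
    intro K
    refine ⟨⌈(K:ℝ) * b / θ⌉₊, fun n hn => ?_⟩
    have h1 : ((K:ℝ) * b / θ) ≤ (n:ℝ) := le_trans (Nat.le_ceil _) (by exact_mod_cast hn)
    have h2 : (K:ℝ) ≤ θ * n / b := by
      rw [le_div_iff₀ hbR]
      calc (K:ℝ) * b ≤ (n:ℝ) * θ := (div_le_iff₀ hθ).mp h1
        _ = θ * n := mul_comm _ _
    calc K = ⌈(K:ℝ)⌉₊ := (Nat.ceil_natCast K).symm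
      _ ≤ ⌈θ * n / b⌉₊ := Nat.ceil_mono h2
  have hgt : Tendsto (fun n => q ^ m n) atTop (𝓝 0) :=
    (tendsto_pow_atTop_nhds_zero_of_lt_one hq0 hq1).comp hmt
  apply squeeze_zero' ?_ ?_ hgt
  · filter_upwards with n
    exact rProb_nonneg n k (p n) (hp n).1 (hp n).2.1 _
  · filter_upwards [eventually_ge_atTop 1] with n hn
    exact key n hn
end

section
/- Let b ≥ 2 be an integer, let ρ > 0, set q = ρ/(1300b²), and let 0 < ε < min{1/3, ρ/2}. Then for all sufficiently large n the following holds. Let V be an n-element set, let V₀ ⊆ V with |V₀| ≤ εn, and suppose that for every v ∈ V we are given a family ℱ_v of at least ρn pairwise disjoint (b−1)-subsets of V∖{v}. Then there exists a set X ⊆ V∖V₀ with qn/2 ≤ |X| ≤ 2qn such that for every v ∈ V at least q^{b−1}·ρn/4 members of ℱ_v are contained in X. -/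
open Finset Filter Topology

namespace RSS
open Real

variable {n : ℕ}

/-- Bernoulli(q) product weight on `Fin n → Bool`. -/
noncomputable def Pw (q : ℝ) (ω : Fin n → Bool) : ℝ := ∏ i, if ω i then q else 1 - q

/-- The random set determined by `ω`. -/
def Xset (ω : Fin n → Bool) : Finset (Fin n) := Finset.univ.filter (fun i => ω i = true)

/-- Indicator that all of `S` is selected. -/
noncomputable def indB (S : Finset (Fin n)) (ω : Fin n → Bool) : ℝ :=
  ∏ i ∈ S, if ω i then 1 else 0

lemma Pw_nonneg {q : ℝ} (h0 : 0 ≤ q) (h1 : q ≤ 1) (ω : Fin n → Bool) : 0 ≤ Pw q ω :=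
  Finset.prod_nonneg fun i _ => by split <;> linarith

lemma sum_Pw (q : ℝ) : ∑ ω : Fin n → Bool, Pw q ω = 1 := by
  classical
  have h := Fintype.prod_sum (ι := Fin n) (κ := fun _ => Bool)
      (f := fun i t => if t then q else 1 - q)
  have : ∑ ω : Fin n → Bool, Pw q ω
      = ∏ i : Fin n, ∑ t : Bool, (if t then q else 1 - q) := h.symm
  rw [this]
  have h3 : ∀ i : Fin n, (∑ t : Bool, (if t then q else 1 - q)) = (1:ℝ) := by
    intro i; rw [Fintype.sum_bool]; simp
  rw [Finset.prod_congr rfl fun i _ => h3 i, Finset.prod_const_one]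

lemma indB_eq (S : Finset (Fin n)) (ω : Fin n → Bool) :
    indB S ω = if S ⊆ Xset ω then 1 else 0 := by
  classical
  by_cases h : S ⊆ Xset ω
  · rw [if_pos h, indB]
    apply Finset.prod_eq_one
    intro i hi
    have := h hi
    simp only [Xset, mem_filter] at this
    simp [this.2]
  · rw [if_neg h, indB]
    obtain ⟨i, hi, hni⟩ := Finset.not_subset.mp h
    refine Finset.prod_eq_zero hi ?_
    have : ¬ ω i = true := by
      intro hw
      exact hni (by simp [Xset, hw])
    simp [this]

lemma indE (q : ℝ) (U : Finset (Fin n)) :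
    ∑ ω : Fin n → Bool, Pw q ω * indB U ω = q ^ U.card := by
  classical
  have key : ∀ ω : Fin n → Bool, Pw q ω * indB U ω
      = ∏ i : Fin n, ((if ω i then q else 1 - q) *
          (if i ∈ U then (if ω i then (1:ℝ) else 0) else 1)) := by
    intro ω
    rw [Finset.prod_mul_distrib, Pw, indB]
    congr 1
    rw [← Finset.prod_filter_mul_prod_filter_not Finset.univ (fun i => i ∈ U)]
    have h1 : ∏ i ∈ Finset.univ.filter (fun i => i ∈ U),
        (if i ∈ U then (if ω i then (1:ℝ) else 0) else 1)
        = ∏ i ∈ U, (if ω i then (1:ℝ) else 0) := by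
      rw [Finset.filter_mem_eq_inter, Finset.univ_inter]
      exact Finset.prod_congr rfl fun i hi => by simp [hi]
    have h2 : ∏ i ∈ Finset.univ.filter (fun i => ¬ i ∈ U),
        (if i ∈ U then (if ω i then (1:ℝ) else 0) else 1) = 1 := by
      apply Finset.prod_eq_one
      intro i hi
      simp only [mem_filter] at hi
      simp [hi.2]
    rw [h1, h2, mul_one]
  simp only [key]
  have h := Fintype.prod_sum (ι := Fin n) (κ := fun _ => Bool)
      (f := fun i t => (if t then q else 1 - q) *
          (if i ∈ U then (if t then (1:ℝ) else 0) else 1))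
  rw [← h]
  have h3 : ∀ i : Fin n,
      (∑ t : Bool, (if t then q else 1 - q) * (if i ∈ U then (if t then (1:ℝ) else 0) else 1))
      = if i ∈ U then q else 1 := by
    intro i
    rw [Fintype.sum_bool]
    by_cases hi : i ∈ U <;> simp [hi]
  rw [Finset.prod_congr rfl (fun i _ => h3 i)]
  rw [Finset.prod_ite_mem, Finset.univ_inter, Finset.prod_const]

/-- Independence/expectation lemma: expectation of the product over disjoint blocks. -/
lemma E_prod (q c : ℝ) (T : Finset (Finset (Fin n)))
    (hdis : ∀ S₁ ∈ T, ∀ S₂ ∈ T, S₁ ≠ S₂ → Disjoint S₁ S₂) :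
    ∑ ω : Fin n → Bool, Pw q ω * ∏ S ∈ T, (1 + c * indB S ω)
      = ∏ S ∈ T, (1 + c * q ^ S.card) := by
  classical
  have expand : ∀ ω : Fin n → Bool, ∏ S ∈ T, (1 + c * indB S ω)
      = ∑ K ∈ T.powerset, c ^ K.card * indB (K.biUnion id) ω := by
    intro ω
    have h1 : ∏ S ∈ T, (1 + c * indB S ω) = ∏ S ∈ T, (c * indB S ω + 1) := by
      apply Finset.prod_congr rfl; intro S _; ring
    rw [h1, Finset.prod_add]
    apply Finset.sum_congr rfl
    intro K hK
    rw [Finset.mem_powerset] at hK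
    rw [Finset.prod_const_one, mul_one, Finset.prod_mul_distrib, Finset.prod_const]
    congr 1
    rw [indB, Finset.prod_biUnion]
    · exact Finset.prod_congr rfl fun S _ => rfl
    · intro S₁ h₁ S₂ h₂ hne
      exact hdis S₁ (hK h₁) S₂ (hK h₂) hne
  calc ∑ ω : Fin n → Bool, Pw q ω * ∏ S ∈ T, (1 + c * indB S ω)
      = ∑ ω : Fin n → Bool, ∑ K ∈ T.powerset,
          c ^ K.card * (Pw q ω * indB (K.biUnion id) ω) := by
        apply Finset.sum_congr rfl; intro ω _
        rw [expand ω, Finset.mul_sum]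
        apply Finset.sum_congr rfl; intro K _; ring
    _ = ∑ K ∈ T.powerset, c ^ K.card * (∑ ω : Fin n → Bool, Pw q ω * indB (K.biUnion id) ω) := by
        rw [Finset.sum_comm]
        apply Finset.sum_congr rfl; intro K _
        rw [Finset.mul_sum]
    _ = ∑ K ∈ T.powerset, c ^ K.card * q ^ ((K.biUnion id).card) := by
        apply Finset.sum_congr rfl; intro K _
        rw [indE]
    _ = ∑ K ∈ T.powerset, (∏ S ∈ K, (c * q ^ S.card)) * ∏ S ∈ T \ K, (1:ℝ) := by
        apply Finset.sum_congr rfl; intro K hK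
        rw [Finset.mem_powerset] at hK
        rw [Finset.card_biUnion, Finset.prod_mul_distrib, Finset.prod_const,
          Finset.prod_const_one, mul_one, ← Finset.prod_pow_eq_pow_sum]
        · simp
        · intro S₁ h₁ S₂ h₂ hne
          exact hdis S₁ (hK h₁) S₂ (hK h₂) hne
    _ = ∏ S ∈ T, (c * q ^ S.card + 1) := (Finset.prod_add _ _ T).symm
    _ = ∏ S ∈ T, (1 + c * q ^ S.card) := by
        apply Finset.prod_congr rfl; intro S _; ring

lemma prod_eq_pow_count (c : ℝ) (T : Finset (Finset (Fin n))) (ω : Fin n → Bool) :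
    ∏ S ∈ T, (1 + c * indB S ω)
      = (1 + c) ^ (T.filter fun S => S ⊆ Xset ω).card := by
  classical
  rw [← Finset.prod_filter_mul_prod_filter_not T (fun S => S ⊆ Xset ω)]
  have h1 : ∏ S ∈ T.filter (fun S => S ⊆ Xset ω), (1 + c * indB S ω)
      = (1 + c) ^ (T.filter fun S => S ⊆ Xset ω).card := by
    rw [← Finset.prod_const]
    apply Finset.prod_congr rfl
    intro S hS
    rw [mem_filter] at hS
    rw [indB_eq, if_pos hS.2, mul_one]
  have h2 : ∏ S ∈ T.filter (fun S => ¬ S ⊆ Xset ω), (1 + c * indB S ω) = 1 := by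
    apply Finset.prod_eq_one
    intro S hS
    rw [mem_filter] at hS
    rw [indB_eq, if_neg hS.2, mul_zero, add_zero]
  rw [h1, h2, mul_one]

lemma sum_union_le' {α : Type*} [DecidableEq α] {f : α → ℝ} (hf : ∀ a, 0 ≤ f a)
    (s t : Finset α) : ∑ x ∈ s ∪ t, f x ≤ ∑ x ∈ s, f x + ∑ x ∈ t, f x := by
  have h := Finset.sum_union_inter (s₁ := s) (s₂ := t) (f := f)
  have h2 : 0 ≤ ∑ x ∈ s ∩ t, f x := Finset.sum_nonneg fun x _ => hf x
  linarith

lemma sum_biUnion_le' {α β : Type*} [DecidableEq β] {f : β → ℝ} (hf : ∀ b, 0 ≤ f b)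
    (s : Finset α) (t : α → Finset β) :
    ∑ x ∈ s.biUnion t, f x ≤ ∑ a ∈ s, ∑ x ∈ t a, f x := by
  classical
  induction s using Finset.induction_on with
  | empty => simp
  | insert _ _ hx ih =>
    rename_i a s'
    rw [Finset.biUnion_insert, Finset.sum_insert hx]
    calc ∑ x ∈ t a ∪ s'.biUnion t, f x ≤ ∑ x ∈ t a, f x + ∑ x ∈ s'.biUnion t, f x :=
          sum_union_le' hf _ _
      _ ≤ ∑ x ∈ t a, f x + ∑ a' ∈ s', ∑ x ∈ t a', f x := by linarith

/-- Chernoff lower-tail bound. -/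
lemma lower_tail {q : ℝ} (hq0 : 0 < q) (hq1 : q < 1) (T : Finset (Finset (Fin n)))
    (hdis : ∀ S₁ ∈ T, ∀ S₂ ∈ T, S₁ ≠ S₂ → Disjoint S₁ S₂)
    (s : ℕ) (hs : 1 ≤ s) (hcard : ∀ S ∈ T, S.card = s)
    (y : ℝ) (hy : 0 ≤ y)
    (E : Finset (Fin n → Bool))
    (hE : ∀ ω ∈ E, (((T.filter fun S => S ⊆ Xset ω).card : ℝ)) ≤ y) :
    ∑ ω ∈ E, Pw q ω ≤ Real.exp (y / 4 - (T.card : ℝ) * q ^ s / 5) := by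
  classical
  set lam : ℝ := Real.exp (-(1/4)) with hlam
  have hlam0 : 0 < lam := Real.exp_pos _
  have hlam1 : lam ≤ 4/5 := by
    have h54 : (5/4 : ℝ) ≤ Real.exp (1/4) := by
      have := Real.add_one_le_exp (1/4 : ℝ); linarith
    have := Real.exp_pos (1/4 : ℝ)
    rw [hlam, Real.exp_neg]
    rw [inv_le_iff_one_le_mul₀ this]  -- maybe wrong name; fix below
    nlinarith
  have hqs0 : 0 < q ^ s := pow_pos hq0 s
  have hqs1 : q ^ s ≤ 1 := pow_le_one₀ (le_of_lt hq0) (le_of_lt hq1)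
  -- pointwise : for ω ∈ E, Pw q ω * exp (-(y/4)) ≤ Pw q ω * lam ^ count ω
  have key : (∑ ω ∈ E, Pw q ω) * Real.exp (-(y/4))
      ≤ ∑ ω : Fin n → Bool, Pw q ω * ∏ S ∈ T, (1 + (lam - 1) * indB S ω) := by
    rw [Finset.sum_mul]
    have step1 : ∀ ω ∈ E, Pw q ω * Real.exp (-(y/4))
        ≤ Pw q ω * ∏ S ∈ T, (1 + (lam - 1) * indB S ω) := by
      intro ω hω
      rw [prod_eq_pow_count]
      have hcount := hE ω hω
      have hpow : Real.exp (-(y/4)) ≤ (1 + (lam - 1)) ^ (T.filter fun S => S ⊆ Xset ω).card := by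
        have : (1 + (lam - 1)) = lam := by ring
        rw [this, ← Real.exp_nat_mul]
        apply Real.exp_le_exp.mpr
        have hc : ((T.filter fun S => S ⊆ Xset ω).card : ℝ) ≤ y := hcount
        nlinarith
      exact mul_le_mul_of_nonneg_left hpow (Pw_nonneg (le_of_lt hq0) (le_of_lt hq1) ω)
    calc ∑ ω ∈ E, Pw q ω * Real.exp (-(y/4))
        ≤ ∑ ω ∈ E, Pw q ω * ∏ S ∈ T, (1 + (lam - 1) * indB S ω) :=
          Finset.sum_le_sum step1
      _ ≤ ∑ ω : Fin n → Bool, Pw q ω * ∏ S ∈ T, (1 + (lam - 1) * indB S ω) := by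
          apply Finset.sum_le_sum_of_subset_of_nonneg (Finset.subset_univ E)
          intro ω _ _
          apply mul_nonneg (Pw_nonneg (le_of_lt hq0) (le_of_lt hq1) ω)
          apply Finset.prod_nonneg
          intro S hS
          rw [indB_eq]
          split <;> nlinarith
  rw [E_prod q (lam - 1) T hdis] at key
  -- bound the product
  have hprod : ∏ S ∈ T, (1 + (lam - 1) * q ^ S.card)
      ≤ Real.exp (-(T.card : ℝ) * q ^ s / 5) := by
    have heach : ∀ S ∈ T, (1 + (lam - 1) * q ^ S.card) = 1 + (lam - 1) * q ^ s := by
      intro S hS; rw [hcard S hS]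
    rw [Finset.prod_congr rfl heach, Finset.prod_const]
    have h1 : (1 : ℝ) + (lam - 1) * q ^ s ≤ Real.exp (-(q ^ s / 5)) := by
      have := Real.add_one_le_exp ((lam - 1) * q ^ s)
      have hmono : Real.exp ((lam - 1) * q ^ s) ≤ Real.exp (-(q ^ s / 5)) := by
        apply Real.exp_le_exp.mpr
        nlinarith
      linarith
    have h0 : (0:ℝ) ≤ 1 + (lam - 1) * q ^ s := by nlinarith
    calc (1 + (lam - 1) * q ^ s) ^ T.card ≤ (Real.exp (-(q ^ s / 5))) ^ T.card :=
          pow_le_pow_left₀ h0 h1 _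
      _ = Real.exp (-(T.card : ℝ) * q ^ s / 5) := by
          rw [← Real.exp_nat_mul]; ring_nf
  have hfin : (∑ ω ∈ E, Pw q ω) * Real.exp (-(y/4))
      ≤ Real.exp (-(T.card : ℝ) * q ^ s / 5) := le_trans key hprod
  have hepos : (0:ℝ) < Real.exp (-(y/4)) := Real.exp_pos _
  rw [← le_div_iff₀ hepos] at hfin
  calc ∑ ω ∈ E, Pw q ω ≤ Real.exp (-(T.card : ℝ) * q ^ s / 5) / Real.exp (-(y/4)) := hfin
    _ = Real.exp (y / 4 - (T.card : ℝ) * q ^ s / 5) := by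
        rw [← Real.exp_sub]; ring_nf

/-- Chernoff upper-tail bound. -/
lemma upper_tail {q : ℝ} (hq0 : 0 < q) (hq1 : q < 1) (T : Finset (Finset (Fin n)))
    (hdis : ∀ S₁ ∈ T, ∀ S₂ ∈ T, S₁ ≠ S₂ → Disjoint S₁ S₂)
    (s : ℕ) (hcard : ∀ S ∈ T, S.card = s)
    (y : ℝ)
    (E : Finset (Fin n → Bool))
    (hE : ∀ ω ∈ E, y ≤ ((T.filter fun S => S ⊆ Xset ω).card : ℝ)) :
    ∑ ω ∈ E, Pw q ω ≤ Real.exp ((7/4) * (T.card : ℝ) * q ^ s - y) := by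
  classical
  set lam : ℝ := Real.exp 1 with hlam
  have hlam1 : (1:ℝ) ≤ lam := by
    have := Real.add_one_le_exp (1:ℝ); rw [hlam]; linarith
  have hlam74 : lam - 1 ≤ 7/4 := by
    have := Real.exp_one_lt_d9; rw [hlam]; linarith
  have hqs0 : 0 < q ^ s := pow_pos hq0 s
  have hqs1 : q ^ s ≤ 1 := pow_le_one₀ (le_of_lt hq0) (le_of_lt hq1)
  have key : (∑ ω ∈ E, Pw q ω) * Real.exp y
      ≤ ∑ ω : Fin n → Bool, Pw q ω * ∏ S ∈ T, (1 + (lam - 1) * indB S ω) := by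
    rw [Finset.sum_mul]
    have step1 : ∀ ω ∈ E, Pw q ω * Real.exp y
        ≤ Pw q ω * ∏ S ∈ T, (1 + (lam - 1) * indB S ω) := by
      intro ω hω
      rw [prod_eq_pow_count]
      have hcount := hE ω hω
      have hpow : Real.exp y ≤ (1 + (lam - 1)) ^ (T.filter fun S => S ⊆ Xset ω).card := by
        have h1 : (1 + (lam - 1)) = lam := by ring
        rw [h1, hlam, ← Real.exp_nat_mul]
        apply Real.exp_le_exp.mpr
        have hc := hcount
        nlinarith
      exact mul_le_mul_of_nonneg_left hpow (Pw_nonneg (le_of_lt hq0) (le_of_lt hq1) ω)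
    calc ∑ ω ∈ E, Pw q ω * Real.exp y
        ≤ ∑ ω ∈ E, Pw q ω * ∏ S ∈ T, (1 + (lam - 1) * indB S ω) :=
          Finset.sum_le_sum step1
      _ ≤ ∑ ω : Fin n → Bool, Pw q ω * ∏ S ∈ T, (1 + (lam - 1) * indB S ω) := by
          apply Finset.sum_le_sum_of_subset_of_nonneg (Finset.subset_univ E)
          intro ω _ _
          apply mul_nonneg (Pw_nonneg (le_of_lt hq0) (le_of_lt hq1) ω)
          apply Finset.prod_nonneg
          intro S hS
          rw [indB_eq]
          split <;> nlinarith
  rw [E_prod q (lam - 1) T hdis] at key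
  have hprod : ∏ S ∈ T, (1 + (lam - 1) * q ^ S.card)
      ≤ Real.exp ((7/4) * (T.card : ℝ) * q ^ s) := by
    have heach : ∀ S ∈ T, (1 + (lam - 1) * q ^ S.card) = 1 + (lam - 1) * q ^ s := by
      intro S hS; rw [hcard S hS]
    rw [Finset.prod_congr rfl heach, Finset.prod_const]
    have h1 : (1 : ℝ) + (lam - 1) * q ^ s ≤ Real.exp ((7/4) * q ^ s) := by
      have := Real.add_one_le_exp ((lam - 1) * q ^ s)
      have hmono : Real.exp ((lam - 1) * q ^ s) ≤ Real.exp ((7/4) * q ^ s) := by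
        apply Real.exp_le_exp.mpr
        nlinarith
      linarith
    have h0 : (0:ℝ) ≤ 1 + (lam - 1) * q ^ s := by nlinarith
    calc (1 + (lam - 1) * q ^ s) ^ T.card ≤ (Real.exp ((7/4) * q ^ s)) ^ T.card :=
          pow_le_pow_left₀ h0 h1 _
      _ = Real.exp ((7/4) * (T.card : ℝ) * q ^ s) := by
          rw [← Real.exp_nat_mul]; ring_nf
  have hfin : (∑ ω ∈ E, Pw q ω) * Real.exp y
      ≤ Real.exp ((7/4) * (T.card : ℝ) * q ^ s) := le_trans key hprod
  have hepos : (0:ℝ) < Real.exp y := Real.exp_pos _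
  rw [← le_div_iff₀ hepos] at hfin
  calc ∑ ω ∈ E, Pw q ω ≤ Real.exp ((7/4) * (T.card : ℝ) * q ^ s) / Real.exp y := hfin
    _ = Real.exp ((7/4) * (T.card : ℝ) * q ^ s - y) := by rw [← Real.exp_sub]

lemma exp_neg_two_lt_third : Real.exp (-2) < 1/3 := by
  have h2 : (2:ℝ) ≤ Real.exp 1 := by
    have := Real.add_one_le_exp (1:ℝ); linarith
  have h3 : (3:ℝ) < Real.exp 2 := by
    have hee : Real.exp 2 = Real.exp 1 * Real.exp 1 := by
      rw [← Real.exp_add]; norm_num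
    nlinarith
  have hmul : Real.exp (-2) * Real.exp 2 = 1 := by
    rw [← Real.exp_add]; norm_num
  nlinarith [Real.exp_pos (-2)]

end RSS


set_option maxHeartbeats 2000000 in
open RSS in
/-- Let `b ≥ 2`, `ρ > 0`, `q = ρ/(1300 b²)`, and
`0 < ε < min{1/3, ρ/2}`. For all sufficiently large `n`: given `V₀ ⊆ V` with
`|V₀| ≤ εn` and, for every `v ∈ V`, a family `ℱ_v` of at least `ρn` pairwise disjoint
`(b-1)`-subsets of `V ∖ {v}`, there is `X ⊆ V ∖ V₀` with `qn/2 ≤ |X| ≤ 2qn` such that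
for every `v` at least `q^{b-1} ρ n / 4` members of `ℱ_v` are contained in `X`. -/
theorem random_subset_selection
    (b : ℕ) (hb : 2 ≤ b) (ρ : ℝ) (hρ : 0 < ρ)
    (ε : ℝ) (hε0 : 0 < ε) (hε : ε < min (1 / 3) (ρ / 2)) :
    ∃ n₀ : ℕ, ∀ n : ℕ, n₀ ≤ n →
      ∀ V₀ : Finset (Fin n), (V₀.card : ℝ) ≤ ε * n →
      ∀ 𝓕 : Fin n → Finset (Finset (Fin n)),
        (∀ v, ρ * n ≤ ((𝓕 v).card : ℝ)) →
        (∀ v, ∀ S ∈ 𝓕 v, S.card = b - 1 ∧ v ∉ S) →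
        (∀ v, ∀ S₁ ∈ 𝓕 v, ∀ S₂ ∈ 𝓕 v, S₁ ≠ S₂ → Disjoint S₁ S₂) →
        ∃ X : Finset (Fin n), X ⊆ Finset.univ \ V₀ ∧
          ρ / (1300 * (b : ℝ) ^ 2) * n / 2 ≤ (X.card : ℝ) ∧
          (X.card : ℝ) ≤ 2 * (ρ / (1300 * (b : ℝ) ^ 2) * n) ∧
          ∀ v : Fin n,
            (ρ / (1300 * (b : ℝ) ^ 2)) ^ (b - 1) * ρ * n / 4 ≤
              (((𝓕 v).filter fun S => S ⊆ X).card : ℝ) := by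
  classical
  have hbR : (2:ℝ) ≤ (b:ℝ) := by exact_mod_cast hb
  set q : ℝ := ρ / (1300 * (b : ℝ) ^ 2) with hqdef
  clear_value q
  have hq0 : 0 < q := by
    rw [hqdef]; apply div_pos hρ; nlinarith
  set c2 : ℝ := 3/80 * q ^ (b-1) * ρ with hc2def
  clear_value c2
  have hc20 : 0 < c2 := by
    have := pow_pos hq0 (b-1); rw [hc2def]; positivity
  have hε3 : ε < 1/3 := lt_of_lt_of_le hε (min_le_left _ _)
  have hερ : ε < ρ/2 := lt_of_lt_of_le hε (min_le_right _ _)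
  refine ⟨(max ⌈240/q⌉₊ ⌈12/c2^2⌉₊) + 1, ?_⟩
  intro n hn V₀ hV₀ 𝓕 h𝓕card h𝓕mem h𝓕dis
  have hn1 : 1 ≤ n := le_trans (by omega) hn
  have hnR : (1:ℝ) ≤ (n:ℝ) := by exact_mod_cast hn1
  have hceil1 : ⌈240/q⌉₊ ≤ n := by omega
  have hceil2 : ⌈12/c2^2⌉₊ ≤ n := by omega
  have h240 : 240 / q ≤ (n:ℝ) := le_trans (Nat.le_ceil _) (by exact_mod_cast hceil1)
  have h12 : 12 / c2^2 ≤ (n:ℝ) := le_trans (Nat.le_ceil _) (by exact_mod_cast hceil2)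
  have hqn : 240 ≤ q * n := by
    rw [div_le_iff₀ hq0] at h240; linarith
  have hc2n : 12 ≤ c2^2 * n := by
    have : 0 < c2^2 := by positivity
    rw [div_le_iff₀ this] at h12; linarith
  clear hn hceil1 hceil2
  -- ρ ≤ 1 and q < 1
  have v0 : Fin n := ⟨0, hn1⟩
  have hρ1 : ρ ≤ 1 := by
    have hcardle : (𝓕 v0).card ≤ n := by
      have hkey : (𝓕 v0).card ≤ (Finset.univ : Finset (Fin n)).card := by
        apply Finset.card_le_card_of_injOn
          (fun S : Finset (Fin n) => if h : S.Nonempty then h.choose else v0)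
          (fun S _ => Finset.mem_univ _)
        intro S₁ h₁ S₂ h₂ heq
        rw [Finset.mem_coe] at h₁ h₂
        by_contra hne
        have hne1 : S₁.Nonempty := Finset.card_pos.mp (by
          rw [(h𝓕mem v0 S₁ h₁).1]; omega)
        have hne2 : S₂.Nonempty := Finset.card_pos.mp (by
          rw [(h𝓕mem v0 S₂ h₂).1]; omega)
        dsimp only at heq
        rw [dif_pos hne1, dif_pos hne2] at heq
        have c1 : hne1.choose ∈ S₁ := hne1.choose_spec
        have c2' : hne2.choose ∈ S₂ := hne2.choose_spec
        exact Finset.disjoint_left.mp (h𝓕dis v0 S₁ h₁ S₂ h₂ hne) c1 (heq ▸ c2')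
      simpa [Finset.card_univ] using hkey
    have h1 := h𝓕card v0
    have h2 : ((𝓕 v0).card : ℝ) ≤ (n:ℝ) := by exact_mod_cast hcardle
    nlinarith
  have hq1 : q < 1 := by
    rw [hqdef, div_lt_one (by nlinarith)]
    nlinarith
  -- the ground set W
  set W : Finset (Fin n) := Finset.univ \ V₀ with hWdef
  clear_value W
  have hV₀n : V₀.card ≤ n := by
    have := Finset.card_le_card (Finset.subset_univ V₀)
    simpa [Finset.card_univ] using this
  have hWcard : (W.card : ℝ) = (n:ℝ) - V₀.card := by
    rw [hWdef, Finset.card_sdiff_of_subset (Finset.subset_univ V₀)]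
    rw [Finset.card_univ, Fintype.card_fin]
    exact Nat.cast_sub hV₀n
  have hWlb : (1 - ε) * n ≤ (W.card : ℝ) := by rw [hWcard]; nlinarith
  have hWub : (W.card : ℝ) ≤ n := by rw [hWcard]; nlinarith [show (0:ℝ) ≤ (V₀.card:ℝ) from Nat.cast_nonneg _]
  -- singleton blocks
  set T0 : Finset (Finset (Fin n)) := W.image (fun i => {i}) with hT0def
  clear_value T0
  have hT0card : T0.card = W.card := by
    rw [hT0def]; exact Finset.card_image_of_injective _ Finset.singleton_injective
  have hT0dis : ∀ S₁ ∈ T0, ∀ S₂ ∈ T0, S₁ ≠ S₂ → Disjoint S₁ S₂ := by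
    intro S₁ h₁ S₂ h₂ hne
    rw [hT0def, Finset.mem_image] at h₁ h₂
    obtain ⟨i, _, rfl⟩ := h₁
    obtain ⟨j, _, rfl⟩ := h₂
    have : i ≠ j := fun h => hne (by rw [h])
    exact Finset.disjoint_singleton.mpr this
  have hT0s : ∀ S ∈ T0, S.card = 1 := by
    intro S hS
    rw [hT0def, Finset.mem_image] at hS
    obtain ⟨i, _, rfl⟩ := hS
    simp
  have hcount0 : ∀ ω : Fin n → Bool,
      (T0.filter fun S => S ⊆ Xset ω).card = (W ∩ Xset ω).card := by
    intro ω
    rw [hT0def, Finset.filter_image,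
      Finset.card_image_of_injective _ Finset.singleton_injective]
    congr 1
    rw [← Finset.filter_mem_eq_inter]
    apply Finset.filter_congr
    intro i _
    simp [Finset.singleton_subset_iff]
  -- events
  set E1 : Finset (Fin n → Bool) :=
    Finset.univ.filter (fun ω => ((W ∩ Xset ω).card : ℝ) ≤ q * n / 2) with hE1def
  clear_value E1
  set E2 : Finset (Fin n → Bool) :=
    Finset.univ.filter (fun ω => 2 * (q * n) ≤ ((W ∩ Xset ω).card : ℝ)) with hE2def
  clear_value E2
  set Tv : Fin n → Finset (Finset (Fin n)) :=
    fun v => (𝓕 v).filter (fun S => Disjoint S V₀) with hTvdef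
  clear_value Tv
  set E3 : Fin n → Finset (Fin n → Bool) :=
    fun v => Finset.univ.filter
      (fun ω => (((Tv v).filter fun S => S ⊆ Xset ω).card : ℝ) ≤ q ^ (b-1) * ρ * n / 4)
    with hE3def
  clear_value E3
  have hexp2 : Real.exp (-2) < 1/3 := exp_neg_two_lt_third
  -- bound for E1
  have bound1 : ∑ ω ∈ E1, Pw q ω < 1/3 := by
    have h := lower_tail hq0 hq1 T0 hT0dis 1 le_rfl hT0s (q * n / 2)
      (by positivity) E1 ?_
    · refine lt_of_le_of_lt (le_trans h ?_) hexp2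
      apply Real.exp_le_exp.mpr
      rw [hT0card, pow_one]
      have hW5 : q * ((1-ε) * n) ≤ q * W.card :=
        mul_le_mul_of_nonneg_left hWlb (le_of_lt hq0)
      nlinarith
    · intro ω hω
      rw [hE1def, Finset.mem_filter] at hω
      rw [hcount0 ω]
      exact hω.2
  -- bound for E2
  have bound2 : ∑ ω ∈ E2, Pw q ω < 1/3 := by
    have h := upper_tail hq0 hq1 T0 hT0dis 1 hT0s (2 * (q * n)) E2 ?_
    · refine lt_of_le_of_lt (le_trans h ?_) hexp2
      apply Real.exp_le_exp.mpr
      rw [hT0card, pow_one]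
      have hW5 : q * W.card ≤ q * n := mul_le_mul_of_nonneg_left hWub (le_of_lt hq0)
      nlinarith
    · intro ω hω
      rw [hE2def, Finset.mem_filter] at hω
      rw [hcount0 ω]
      exact hω.2
  -- bound for E3 v
  have hTvcardlb : ∀ v : Fin n, ρ * n / 2 ≤ ((Tv v).card : ℝ) := by
    intro v
    have hsplit := Finset.card_filter_add_card_filter_not
      (s := 𝓕 v) (p := fun S => Disjoint S V₀)
    have hbad : ((𝓕 v).filter fun S => ¬ Disjoint S V₀).card ≤ V₀.card := by
      apply Finset.card_le_card_of_injOn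
        (f := fun S : Finset (Fin n) => if h : (S ∩ V₀).Nonempty then h.choose else v)
      · intro S hS
        rw [Finset.mem_coe, Finset.mem_filter] at hS
        have hne : (S ∩ V₀).Nonempty := Finset.not_disjoint_iff_nonempty_inter.mp hS.2
        dsimp only; rw [dif_pos hne]
        exact (Finset.mem_inter.mp hne.choose_spec).2
      · intro S₁ h₁ S₂ h₂ heq
        rw [Finset.mem_coe, Finset.mem_filter] at h₁ h₂
        by_contra hne
        have hne1 : (S₁ ∩ V₀).Nonempty := Finset.not_disjoint_iff_nonempty_inter.mp h₁.2
        have hne2 : (S₂ ∩ V₀).Nonempty := Finset.not_disjoint_iff_nonempty_inter.mp h₂.2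
        dsimp only at heq
        rw [dif_pos hne1, dif_pos hne2] at heq
        have c1 : hne1.choose ∈ S₁ := (Finset.mem_inter.mp hne1.choose_spec).1
        have c2' : hne2.choose ∈ S₂ := (Finset.mem_inter.mp hne2.choose_spec).1
        exact Finset.disjoint_left.mp (h𝓕dis v S₁ h₁.1 S₂ h₂.1 hne) c1 (heq ▸ c2')
    have h1 := h𝓕card v
    have h2 : ((𝓕 v).card : ℝ) ≤ ((Tv v).card : ℝ) + V₀.card := by
      rw [hTvdef]
      have : (𝓕 v).card ≤ ((𝓕 v).filter (fun S => Disjoint S V₀)).card + V₀.card := by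
        omega
      exact_mod_cast this
    nlinarith
  have bound3 : ∀ v : Fin n, ∑ ω ∈ E3 v, Pw q ω ≤ Real.exp (-(c2 * n)) := by
    intro v
    have hs1 : 1 ≤ b - 1 := by omega
    have hTvdis : ∀ S₁ ∈ Tv v, ∀ S₂ ∈ Tv v, S₁ ≠ S₂ → Disjoint S₁ S₂ := by
      intro S₁ h₁ S₂ h₂ hne
      rw [hTvdef, Finset.mem_filter] at h₁ h₂
      exact h𝓕dis v S₁ h₁.1 S₂ h₂.1 hne
    have hTvs : ∀ S ∈ Tv v, S.card = b - 1 := by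
      intro S hS
      rw [hTvdef, Finset.mem_filter] at hS
      exact (h𝓕mem v S hS.1).1
    have h := lower_tail hq0 hq1 (Tv v) hTvdis (b-1) hs1 hTvs (q ^ (b-1) * ρ * n / 4)
      (by positivity) (E3 v) ?_
    · refine le_trans h ?_
      apply Real.exp_le_exp.mpr
      have hql := hTvcardlb v
      have hq5 : q ^ (b-1) * (ρ * n / 2) ≤ q ^ (b-1) * ((Tv v).card : ℝ) :=
        mul_le_mul_of_nonneg_left hql (le_of_lt (pow_pos hq0 _))
      rw [hc2def]
      nlinarith [pow_pos hq0 (b-1)]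
    · intro ω hω
      rw [hE3def] at hω
      rw [Finset.mem_filter] at hω
      exact hω.2
  -- sum of E3 bounds
  have bound3tot : ∑ v : Fin n, ∑ ω ∈ E3 v, Pw q ω < 1/3 := by
    have hsum : ∑ v : Fin n, ∑ ω ∈ E3 v, Pw q ω ≤ (n:ℝ) * Real.exp (-(c2 * n)) := by
      calc ∑ v : Fin n, ∑ ω ∈ E3 v, Pw q ω ≤ ∑ _v : Fin n, Real.exp (-(c2 * n)) :=
            Finset.sum_le_sum (fun v _ => bound3 v)
        _ = (n:ℝ) * Real.exp (-(c2 * n)) := by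
            rw [Finset.sum_const, Finset.card_univ, Fintype.card_fin, nsmul_eq_mul]
    have hx0 : 0 < c2 * n := by positivity
    have hbig : 3 * (n:ℝ) < Real.exp (c2 * n) := by
      have h1 : (1:ℝ) + c2 * n / 2 ≤ Real.exp (c2 * n / 2) := by
        have := Real.add_one_le_exp (c2 * n / 2); linarith
      have h2 : Real.exp (c2 * n) = Real.exp (c2 * n / 2) * Real.exp (c2 * n / 2) := by
        rw [← Real.exp_add]; ring_nf
      have h3 : (1 + c2 * n / 2)^2 ≤ Real.exp (c2 * n) := by
        rw [h2]; nlinarith [Real.exp_pos (c2 * n / 2)]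
      have h4 : 12 * (n:ℝ) ≤ (c2 * n)^2 := by nlinarith
      nlinarith
    have hmul : Real.exp (-(c2 * n)) * Real.exp (c2 * n) = 1 := by
      rw [← Real.exp_add]; ring_nf; exact Real.exp_zero
    have : (n:ℝ) * Real.exp (-(c2 * n)) < 1/3 := by
      nlinarith [Real.exp_pos (-(c2 * n)), Real.exp_pos (c2 * n)]
    linarith
  -- union bound
  set Bad : Finset (Fin n → Bool) :=
    (E1 ∪ E2) ∪ Finset.univ.biUnion (fun v => E3 v) with hBaddef
  clear_value Bad
  have hPwnn : ∀ ω : Fin n → Bool, 0 ≤ Pw q ω :=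
    Pw_nonneg (le_of_lt hq0) (le_of_lt hq1)
  have hBadsum : ∑ ω ∈ Bad, Pw q ω < 1 := by
    rw [hBaddef]
    have h1 := sum_union_le' hPwnn (E1 ∪ E2) (Finset.univ.biUnion fun v => E3 v)
    have h2 := sum_union_le' hPwnn E1 E2
    have h3 := sum_biUnion_le' hPwnn Finset.univ (fun v => E3 v)
    linarith
  have hex : ∃ ω : Fin n → Bool, ω ∉ Bad := by
    by_contra hc
    push_neg at hc
    have : Bad = Finset.univ := Finset.eq_univ_iff_forall.mpr hc
    rw [this, sum_Pw q] at hBadsum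
    linarith
  obtain ⟨ω, hω⟩ := hex
  rw [hBaddef] at hω
  have hωE1 : ω ∉ E1 := fun h => hω (Finset.mem_union_left _ (Finset.mem_union_left _ h))
  have hωE2 : ω ∉ E2 := fun h => hω (Finset.mem_union_left _ (Finset.mem_union_right _ h))
  have hωE3 : ∀ v : Fin n, ω ∉ E3 v := fun v h =>
    hω (Finset.mem_union_right _ (Finset.mem_biUnion.mpr ⟨v, Finset.mem_univ _, h⟩))
  have hω1 : ¬ ((W ∩ Xset ω).card : ℝ) ≤ q * n / 2 := by
    intro h
    exact hωE1 (by rw [hE1def]; exact Finset.mem_filter.mpr ⟨Finset.mem_univ _, h⟩)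
  have hω2 : ¬ 2 * (q * n) ≤ ((W ∩ Xset ω).card : ℝ) := by
    intro h
    exact hωE2 (by rw [hE2def]; exact Finset.mem_filter.mpr ⟨Finset.mem_univ _, h⟩)
  have hω3 : ∀ v : Fin n,
      ¬ (((Tv v).filter fun S => S ⊆ Xset ω).card : ℝ) ≤ q ^ (b-1) * ρ * n / 4 := by
    intro v h
    exact hωE3 v (by rw [hE3def]; exact Finset.mem_filter.mpr ⟨Finset.mem_univ _, h⟩)
  refine ⟨W ∩ Xset ω, ?_, ?_, ?_, ?_⟩
  · rw [hWdef]; exact Finset.inter_subset_left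
  · exact le_of_lt (lt_of_not_ge hω1)
  · exact le_of_lt (lt_of_not_ge hω2)
  · intro v
    have hlt := lt_of_not_ge (hω3 v)
    have hsub : (Tv v).filter (fun S => S ⊆ Xset ω)
        ⊆ (𝓕 v).filter (fun S => S ⊆ W ∩ Xset ω) := by
      intro S hS
      rw [Finset.mem_filter] at hS
      have h1 := hS.1
      rw [hTvdef, Finset.mem_filter] at h1
      refine Finset.mem_filter.mpr ⟨h1.1, ?_⟩
      intro i hi
      refine Finset.mem_inter.mpr ⟨?_, hS.2 hi⟩
      rw [hWdef, Finset.mem_sdiff]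
      exact ⟨Finset.mem_univ _, Finset.disjoint_left.mp h1.2 hi⟩
    have hcardle := Finset.card_le_card hsub
    have : (((Tv v).filter fun S => S ⊆ Xset ω).card : ℝ)
        ≤ (((𝓕 v).filter fun S => S ⊆ W ∩ Xset ω).card : ℝ) := by exact_mod_cast hcardle
    linarith
end

section
/- For every k-graph F with at least one edge, α_F = min_{v ∈ V(F)} π(F'_v), where F'_v := { e∖{v} : e ∈ E(F_v) } is the link (k−1)-graph of v in F and π denotes the Turán density: π(G) = lim_{n→∞} ex(n,G)·C(n,k−1)^{−1}, with ex(n,G) the maximum number of edges of a (k−1)-graph on n vertices containing no copy of G. -/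
open Finset Filter Topology

namespace AFab


variable {b : ℕ} (L : Finset (Finset (Fin b)))

/-- uniform graphs have few edges -/
lemma card_le_choose {n k' : ℕ} {H' : Finset (Finset (Fin n))} {U : Finset (Fin n)}
    (h : ∀ e ∈ H', e.card = k' ∧ e ⊆ U) : H'.card ≤ U.card.choose k' := by
  have : H' ⊆ U.powersetCard k' := by
    intro e he
    rw [mem_powersetCard]
    exact ⟨(h e he).2, (h e he).1⟩
  simpa [card_powersetCard] using card_le_card this

lemma exSet_bddAbove (n k' : ℕ) :
    BddAbove { m : ℕ | ∃ H' : Finset (Finset (Fin n)), (∀ e ∈ H', e.card = k') ∧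
    (¬ ∃ f : Fin b → Fin n, Function.Injective f ∧ ∀ e ∈ L, e.image f ∈ H') ∧
    m = H'.card } := by
  refine ⟨n.choose k', ?_⟩
  rintro m ⟨H', hu, -, rfl⟩
  have := card_le_choose (U := (univ : Finset (Fin n))) (H' := H')
    (fun e he => ⟨hu e he, subset_univ e⟩)
  simpa using this

lemma le_exNum {n k' : ℕ} {H' : Finset (Finset (Fin n))}
    (hu : ∀ e ∈ H', e.card = k')
    (hfree : ¬ ∃ f : Fin b → Fin n, Function.Injective f ∧ ∀ e ∈ L, e.image f ∈ H') :
    H'.card ≤ exNum n k' L :=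
  le_csSup (exSet_bddAbove L n k') ⟨H', hu, hfree, rfl⟩

lemma exists_copy {n k' : ℕ} {H' : Finset (Finset (Fin n))}
    (hu : ∀ e ∈ H', e.card = k') (h : exNum n k' L < H'.card) :
    ∃ f : Fin b → Fin n, Function.Injective f ∧ ∀ e ∈ L, e.image f ∈ H' := by
  by_contra hfree
  exact absurd (le_exNum L hu hfree) (not_le.2 h)

lemma exNum_witness {n k' : ℕ} (hL : L.Nonempty) :
    ∃ H' : Finset (Finset (Fin n)), (∀ e ∈ H', e.card = k') ∧
      (¬ ∃ f : Fin b → Fin n, Function.Injective f ∧ ∀ e ∈ L, e.image f ∈ H') ∧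
      H'.card = exNum n k' L := by
  have hne : (0 : ℕ) ∈ { m : ℕ | ∃ H' : Finset (Finset (Fin n)), (∀ e ∈ H', e.card = k') ∧
      (¬ ∃ f : Fin b → Fin n, Function.Injective f ∧ ∀ e ∈ L, e.image f ∈ H') ∧
      m = H'.card } := by
    refine ⟨∅, by simp, ?_, by simp⟩
    rintro ⟨f, -, hf⟩
    obtain ⟨e, he⟩ := hL
    simpa using hf e he
  have := Nat.sSup_mem ⟨_, hne⟩ (exSet_bddAbove L n k')
  obtain ⟨H', hu, hfree, hcard⟩ := this
  exact ⟨H', hu, hfree, hcard.symm⟩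

lemma exNum_empty {n k' : ℕ} (hL : L = ∅) (hbn : b ≤ n) : exNum n k' L = 0 := by
  subst hL
  have : { m : ℕ | ∃ H' : Finset (Finset (Fin n)), (∀ e ∈ H', e.card = k') ∧
      (¬ ∃ f : Fin b → Fin n, Function.Injective f ∧ ∀ e ∈ (∅ : Finset (Finset (Fin b))), e.image f ∈ H') ∧
      m = H'.card } = ∅ := by
    ext m
    simp only [Set.mem_setOf_eq, Set.mem_empty_iff_false, iff_false]
    rintro ⟨H', -, hfree, -⟩
    exact hfree ⟨Fin.castLE hbn, Fin.castLE_injective hbn, by simp⟩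
  rw [exNum, this, csSup_empty]; rfl

lemma exNum_le_choose (n k' : ℕ) : exNum n k' L ≤ n.choose k' := by
  by_cases hne : { m : ℕ | ∃ H' : Finset (Finset (Fin n)), (∀ e ∈ H', e.card = k') ∧
      (¬ ∃ f : Fin b → Fin n, Function.Injective f ∧ ∀ e ∈ L, e.image f ∈ H') ∧
      m = H'.card }.Nonempty
  · refine csSup_le hne ?_
    rintro m ⟨H', hu, -, rfl⟩
    simpa using card_le_choose (U := (univ : Finset (Fin n))) (H' := H')
      (fun e he => ⟨hu e he, subset_univ e⟩)
  · have : exNum n k' L = 0 := by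
      rw [exNum, Set.not_nonempty_iff_eq_empty.1 hne, csSup_empty]; rfl
    simp [this]



/-- number of m-subsets of U containing a fixed e ⊆ U -/
lemma card_supersets {n : ℕ} {U e : Finset (Fin n)} (he : e ⊆ U) {m : ℕ} (hm : e.card ≤ m) :
    ((U.powersetCard m).filter (fun S => e ⊆ S)).card
      = (U.card - e.card).choose (m - e.card) := by
  rw [← card_sdiff_of_subset he, ← card_powersetCard (m - #e) (U \ e)]
  apply card_bij' (fun S _ => S \ e) (fun T _ => T ∪ e)
  · intro S hS
    simp only [mem_filter, mem_powersetCard] at hS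
    rw [mem_powersetCard]
    exact ⟨sdiff_subset_sdiff hS.1.1 le_rfl, by rw [card_sdiff_of_subset hS.2, hS.1.2]⟩
  · intro T hT
    rw [mem_powersetCard] at hT
    have hTU : T ⊆ U \ e := hT.1
    have hdisj : Disjoint T e := (subset_sdiff.1 hTU).2
    simp only [mem_filter, mem_powersetCard]
    refine ⟨⟨union_subset (hTU.trans sdiff_subset) he, ?_⟩, subset_union_right⟩
    rw [card_union_of_disjoint hdisj, hT.2]
    omega
  · intro S hS
    simp only [mem_filter] at hS
    exact sdiff_union_of_subset hS.2
  · intro T hT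
    rw [mem_powersetCard] at hT
    have hdisj : Disjoint T e := (subset_sdiff.1 hT.1).2
    exact union_sdiff_cancel_right hdisj

lemma card_supersets_le {n : ℕ} (U e : Finset (Fin n)) (m : ℕ) :
    ((U.powersetCard m).filter (fun S => e ⊆ S)).card
      ≤ (U.card - e.card).choose (m - e.card) := by
  by_cases heU : e ⊆ U
  · by_cases hm : e.card ≤ m
    · exact le_of_eq (card_supersets heU hm)
    · have : ((U.powersetCard m).filter (fun S => e ⊆ S)) = ∅ := by
        refine eq_empty_of_forall_notMem (fun S hS => ?_)
        simp only [mem_filter, mem_powersetCard] at hS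
        exact hm (hS.1.2 ▸ card_le_card hS.2)
      simp [this]
  · have : ((U.powersetCard m).filter (fun S => e ⊆ S)) = ∅ := by
      refine eq_empty_of_forall_notMem (fun S hS => ?_)
      simp only [mem_filter, mem_powersetCard] at hS
      exact heU (hS.2.trans hS.1.1)
    simp [this]

/-- double counting pairs (edge, m-set containing it) -/
lemma sum_card_subgraphs {n : ℕ} {U : Finset (Fin n)} {G : Finset (Finset (Fin n))}
    {k' m : ℕ} (hG : ∀ e ∈ G, e.card = k' ∧ e ⊆ U) (hk'm : k' ≤ m) :
    ∑ S ∈ U.powersetCard m, (G.filter (fun e => e ⊆ S)).card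
      = G.card * ((U.card - k').choose (m - k')) := by
  classical
  have h1 : ∀ S ∈ U.powersetCard m, (G.filter (fun e => e ⊆ S)).card
      = ∑ e ∈ G, if e ⊆ S then 1 else 0 := by
    intro S _; rw [← sum_filter, sum_const, smul_eq_mul, mul_one]
  rw [sum_congr rfl h1, sum_comm]
  have h2 : ∀ e ∈ G, (∑ S ∈ U.powersetCard m, if e ⊆ S then 1 else 0)
      = (U.card - k').choose (m - k') := by
    intro e he
    rw [← sum_filter, sum_const, smul_eq_mul, mul_one]
    rw [card_supersets (hG e he).2 (by rw [(hG e he).1]; exact hk'm), (hG e he).1]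
  rw [sum_congr rfl h2, sum_const, smul_eq_mul]

variable {b : ℕ} (L : Finset (Finset (Fin b)))

/-- pushing a copy forward along an injection -/
lemma noCopy_of_image {n m' : ℕ} {j : Fin n → Fin m'} (hj : Function.Injective j)
    {H' : Finset (Finset (Fin n))} {Hm : Finset (Finset (Fin m'))}
    (hmap : ∀ e ∈ H', e.image j ∈ Hm)
    (h : ¬ ∃ f : Fin b → Fin m', Function.Injective f ∧ ∀ e ∈ L, e.image f ∈ Hm) :
    ¬ ∃ f : Fin b → Fin n, Function.Injective f ∧ ∀ e ∈ L, e.image f ∈ H' := by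
  rintro ⟨f, hfi, hfe⟩
  refine h ⟨j ∘ f, hj.comp hfi, fun e he => ?_⟩
  rw [← image_image]
  exact hmap _ (hfe e he)

/-- pulling a copy back along an injection whose range contains the copy -/
lemma copy_pull {n m' : ℕ} {j : Fin n → Fin m'} (hj : Function.Injective j)
    {H' : Finset (Finset (Fin n))} {f : Fin b → Fin m'} (hfi : Function.Injective f)
    (hrange : ∀ x, ∃ y, j y = f x)
    (hedges : ∀ e ∈ L, ∃ e' ∈ H', e.image f = e'.image j) :
    ∃ g : Fin b → Fin n, Function.Injective g ∧ ∀ e ∈ L, e.image g ∈ H' := by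
  choose g hg using hrange
  refine ⟨g, fun x y hxy => hfi (by rw [← hg x, ← hg y, hxy]), fun e he => ?_⟩
  obtain ⟨e', he', heq⟩ := hedges e he
  have : (e.image g).image j = e'.image j := by
    rw [image_image, ← heq]
    exact image_congr (fun x _ => hg x)
  rwa [Finset.image_injective hj this]



/-- (n+1-k') C(n+1,k') = (n+1) C(n,k') -/
lemma choose_id1 {n k' : ℕ} (h : k' ≤ n + 1) :
    (n + 1 - k') * (n+1).choose k' = (n + 1) * n.choose k' := by
  rcases k' with _ | s
  · simp
  · have h1 : (n + 1) * n.choose s = (n+1).choose (s+1) * (s+1) := Nat.add_one_mul_choose_eq n s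
    have h2 : (n+1).choose (s+1) = n.choose s + n.choose (s+1) := Nat.choose_succ_succ n s
    have h3 : (n + 1 - (s+1)) = n - s := by omega
    rw [h3, h2]
    have h4 : (n - s) * (n.choose s + n.choose (s+1))
        = (n - s) * n.choose s + (n - s) * n.choose (s+1) := by ring
    rw [h4]
    have h5 : n.choose (s + 1) * (s + 1) = n.choose s * (n - s) := Nat.choose_succ_right_eq n s
    -- goal: (n-s) * C(n,s) + (n-s)*C(n,s+1) = (n+1) * C(n, s+1)
    -- (n+1) C(n,s+1) = (n-s)C(n,s+1) + (s+1) C(n,s+1) = (n-s)C(n,s+1) + (n-s)C(n,s)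
    have hs : s ≤ n := by omega
    have h6 : (n + 1) * n.choose (s+1) = (n - s) * n.choose (s+1) + (s + 1) * n.choose (s+1) := by
      have : (n+1) = (n - s) + (s+1) := by omega
      rw [this, Nat.add_mul]
    rw [h6]
    have h7 : (s + 1) * n.choose (s+1) = (n - s) * n.choose s := by
      rw [Nat.mul_comm, h5, Nat.mul_comm]
    omega

variable {b : ℕ} (L : Finset (Finset (Fin b)))

noncomputable def exN (k' : ℕ) (n : ℕ) : ℕ :=
  exNum n k' L

/-- the deletion bound -/
lemma exNum_rec (hL : L.Nonempty) (k' n : ℕ) (hk : 1 ≤ k') :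
    (n + 1 - k') * exNum (n+1) k' L ≤ (n + 1) * exNum n k' L := by
  classical
  obtain ⟨H', hu, hfree, hcard⟩ := exNum_witness L (n := n + 1) (k' := k') hL
  -- for every u, the part of H' avoiding u maps to an L-free graph on Fin n
  have key : ∀ u : Fin (n+1), (H'.filter (fun e => u ∉ e)).card ≤ exNum n k' L := by
    intro u
    set q : Finset (Fin (n+1)) → Finset (Fin n) :=
      fun e => univ.filter (fun y => u.succAbove y ∈ e) with hq
    have hqe : ∀ e : Finset (Fin (n+1)), u ∉ e → (q e).image u.succAbove = e := by
      intro e hue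
      ext x
      simp only [mem_image, hq, mem_filter, mem_univ, true_and]
      constructor
      · rintro ⟨y, hy, rfl⟩; exact hy
      · intro hx
        obtain ⟨y, hy⟩ := Fin.exists_succAbove_eq (x := x) (y := u) (fun h => hue (h ▸ hx))
        exact ⟨y, hy.symm ▸ hx, hy⟩
    have hinj : Function.Injective (Fin.succAbove u) := Fin.succAbove_right_injective
    set H'' : Finset (Finset (Fin n)) := (H'.filter (fun e => u ∉ e)).image q with hH''
    have hcard2 : H''.card = (H'.filter (fun e => u ∉ e)).card := by
      apply card_image_of_injOn
      intro e1 h1 e2 h2 h12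
      rw [mem_coe, mem_filter] at h1 h2
      rw [← hqe e1 h1.2, ← hqe e2 h2.2, h12]
    have hu2 : ∀ e ∈ H'', e.card = k' := by
      intro e he
      rw [hH'', mem_image] at he
      obtain ⟨e0, he0, rfl⟩ := he
      rw [mem_filter] at he0
      have : (q e0).image u.succAbove = e0 := hqe e0 he0.2
      calc (q e0).card = ((q e0).image u.succAbove).card := (card_image_of_injective _ hinj).symm
        _ = e0.card := by rw [this]
        _ = k' := hu e0 he0.1
    have hfree2 : ¬ ∃ f : Fin b → Fin n, Function.Injective f ∧ ∀ e ∈ L, e.image f ∈ H'' := by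
      apply noCopy_of_image L hinj (H' := H'') (Hm := H') _ hfree
      intro e he
      rw [hH'', mem_image] at he
      obtain ⟨e0, he0, rfl⟩ := he
      rw [mem_filter] at he0
      rw [hqe e0 he0.2]
      exact he0.1
    calc (H'.filter (fun e => u ∉ e)).card = H''.card := hcard2.symm
      _ ≤ exNum n k' L := le_exNum L hu2 hfree2
  have h2 : ∑ u : Fin (n+1), (H'.filter (fun e => u ∈ e)).card = k' * H'.card := by
    have hx : ∀ u : Fin (n+1), (H'.filter (fun e => u ∈ e)).card
        = ∑ e ∈ H', if u ∈ e then 1 else 0 := by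
      intro u; rw [← sum_filter, sum_const, smul_eq_mul, mul_one]
    rw [sum_congr rfl (fun u _ => hx u), sum_comm]
    have hy : ∀ e ∈ H', (∑ u : Fin (n+1), if u ∈ e then 1 else 0) = k' := by
      intro e he
      rw [← sum_filter, sum_const, smul_eq_mul, mul_one, filter_mem_eq_inter, univ_inter]
      exact hu e he
    rw [sum_congr rfl hy, sum_const, smul_eq_mul, Nat.mul_comm]
  have hsplit : ∀ u : Fin (n+1), (H'.filter (fun e => u ∈ e)).card
      + (H'.filter (fun e => u ∉ e)).card = H'.card := by
    intro u
    exact card_filter_add_card_filter_not (p := fun e => u ∈ e)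
  have hA : (∑ u : Fin (n+1), (H'.filter (fun e => u ∉ e)).card) + k' * H'.card
      = (n+1) * H'.card := by
    rw [← h2, ← sum_add_distrib, sum_congr rfl (fun u _ => by rw [Nat.add_comm, hsplit u]),
      sum_const, card_univ, Fintype.card_fin, smul_eq_mul]
  have hsum : ∑ u : Fin (n+1), (H'.filter (fun e => u ∉ e)).card
      = (n + 1 - k') * H'.card := by
    rcases eq_empty_or_nonempty H' with h | h
    · simp [h]
    · obtain ⟨e, he⟩ := h
      have hk'n : k' ≤ n + 1 := by
        rw [← hu e he]
        calc e.card ≤ (univ : Finset (Fin (n+1))).card := card_le_card (subset_univ e)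
          _ = n + 1 := by simp
      rw [Nat.sub_mul]
      exact Nat.eq_sub_of_add_eq hA
  calc (n + 1 - k') * exNum (n+1) k' L = (n + 1 - k') * H'.card := by rw [hcard]
    _ = ∑ u : Fin (n+1), (H'.filter (fun e => u ∉ e)).card := hsum.symm
    _ ≤ ∑ u : Fin (n+1), exNum n k' L := sum_le_sum (fun u _ => key u)
    _ = (n + 1) * exNum n k' L := by rw [sum_const, card_univ, Fintype.card_fin, smul_eq_mul]


end AFab

namespace AFabD
open Finset Filter Topology AFab

variable {b : ℕ} (L : Finset (Finset (Fin b)))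

noncomputable def dSeq (k' : ℕ) (n : ℕ) : ℝ := (exNum n k' L : ℝ) / (n.choose k' : ℝ)

lemma dSeq_nonneg (k' n : ℕ) : 0 ≤ dSeq L k' n := by
  unfold dSeq; positivity

lemma dSeq_le_one {k' n : ℕ} (h : k' ≤ n) : dSeq L k' n ≤ 1 := by
  rw [dSeq, div_le_one (by exact_mod_cast Nat.cast_pos.2 (Nat.choose_pos h))]
  exact_mod_cast exNum_le_choose L n k'

lemma dSeq_succ_le {k' n : ℕ} (hk : 1 ≤ k') (hbn : b ≤ n) (hk'n : k' < n) :
    dSeq L k' (n + 1) ≤ dSeq L k' n := by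
  rcases eq_empty_or_nonempty L with hL | hL
  · rw [dSeq, dSeq, exNum_empty L hL hbn, exNum_empty L hL (hbn.trans (Nat.le_succ n))]
    simp
  · have hc0 : (0:ℝ) < (n.choose k' : ℝ) := by exact_mod_cast Nat.choose_pos hk'n.le
    have hc1 : (0:ℝ) < ((n+1).choose k' : ℝ) := by
      exact_mod_cast Nat.choose_pos (hk'n.le.trans (Nat.le_succ n))
    rw [dSeq, dSeq, div_le_div_iff₀ hc1 hc0]
    have hnat : exNum (n+1) k' L * n.choose k' ≤ exNum n k' L * (n+1).choose k' := by
      have h1 := Nat.mul_le_mul_right ((n+1).choose k') (exNum_rec L hL k' n hk)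
      have h2 : (n + 1 - k') * exNum (n+1) k' L * (n+1).choose k'
          = (n+1) * (exNum (n+1) k' L * n.choose k') := by
        rw [Nat.mul_assoc, Nat.mul_comm (exNum (n+1) k' L), ← Nat.mul_assoc,
          choose_id1 (by omega)]
        ring
      have h3 : (n + 1) * exNum n k' L * (n+1).choose k'
          = (n+1) * (exNum n k' L * (n+1).choose k') := by ring
      rw [h2, h3] at h1
      exact Nat.le_of_mul_le_mul_left h1 (Nat.succ_pos n)
    exact_mod_cast hnat

noncomputable def piV (k' n₁ : ℕ) : ℝ := ⨅ i : ℕ, dSeq L k' (i + n₁)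

lemma dSeq_shift_antitone {k' n₁ : ℕ} (hk : 1 ≤ k') (hb : b ≤ n₁) (hkn : k' < n₁) :
    Antitone (fun i : ℕ => dSeq L k' (i + n₁)) := by
  apply antitone_nat_of_succ_le
  intro i
  have : i + 1 + n₁ = (i + n₁) + 1 := by omega
  rw [this]
  exact dSeq_succ_le L hk (by omega) (by omega)

lemma bddBelow_dSeq (k' n₁ : ℕ) : BddBelow (Set.range fun i : ℕ => dSeq L k' (i + n₁)) := by
  refine ⟨0, ?_⟩
  rintro x ⟨i, rfl⟩
  exact dSeq_nonneg L k' _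

lemma tendsto_dSeq {k' n₁ : ℕ} (hk : 1 ≤ k') (hb : b ≤ n₁) (hkn : k' < n₁) :
    Tendsto (fun n => dSeq L k' n) atTop (𝓝 (piV L k' n₁)) := by
  have h := tendsto_atTop_ciInf (dSeq_shift_antitone L hk hb hkn) (bddBelow_dSeq L k' n₁)
  exact (tendsto_add_atTop_iff_nat n₁).1 h

lemma piV_nonneg (k' n₁ : ℕ) : 0 ≤ piV L k' n₁ :=
  le_ciInf (fun i => dSeq_nonneg L k' _)

lemma piV_le_dSeq {k' n₁ n : ℕ} (h : n₁ ≤ n) : piV L k' n₁ ≤ dSeq L k' n := by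
  have := ciInf_le (bddBelow_dSeq L k' n₁) (n - n₁)
  rwa [Nat.sub_add_cancel h] at this

lemma piV_le_one {k' n₁ : ℕ} (h : k' ≤ n₁) : piV L k' n₁ ≤ 1 :=
  (piV_le_dSeq L le_rfl).trans (dSeq_le_one L h)

lemma exists_dSeq_lt {k' n₁ : ℕ} {δ : ℝ} (hδ : 0 < δ) :
    ∃ m : ℕ, n₁ ≤ m ∧ dSeq L k' m < piV L k' n₁ + δ := by
  have : piV L k' n₁ < piV L k' n₁ + δ := by linarith
  obtain ⟨i, hi⟩ := exists_lt_of_ciInf_lt this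
  exact ⟨i + n₁, by omega, hi⟩

end AFabD

namespace AFabE
open Finset Filter Topology AFab AFabD

lemma linkAt_card {b k : ℕ} {F : Finset (Finset (Fin b))} (hF : ∀ e ∈ F, e.card = k)
    {v : Fin b} : ∀ e' ∈ linkAt F v, e'.card = k - 1 ∧ v ∉ e' := by
  intro e' he'
  rw [linkAt, mem_image] at he'
  obtain ⟨e, he, rfl⟩ := he'
  rw [mem_filter] at he
  exact ⟨by rw [card_erase_of_mem he.2, hF e he.1], notMem_erase v e⟩

lemma image_of_mem_link {b n : ℕ} {v : Fin b}
    {f : Fin b → Fin n} (hfi : Function.Injective f) {e : Finset (Fin b)}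
    (hv : v ∈ e) :
    e.image f = insert (f v) ((e.erase v).image f) ∧ f v ∉ (e.erase v).image f := by
  constructor
  · conv_lhs => rw [← insert_erase hv]
    exact image_insert f v (e.erase v)
  · rintro hmem
    rw [mem_image] at hmem
    obtain ⟨x, hx, hfx⟩ := hmem
    exact (mem_erase.1 hx).1 (hfi hfx)

lemma lower_bound {k b : ℕ} (hk : 2 ≤ k) (hb : 0 < b) (F : Finset (Finset (Fin b)))
    (hF : ∀ e ∈ F, e.card = k) (v : Fin b) {a : ℝ}
    (ha : a ∈ LambdaSet k b F v) : piV (linkAt F v) (k-1) (b + k) ≤ a := by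
  classical
  set L := linkAt F v with hLdef
  set π := piV L (k-1) (b + k) with hπdef
  by_contra hcon
  push_neg at hcon
  have ha0 : 0 < a := ha.1
  rcases eq_empty_or_nonempty L with hL | hL
  · have h0 : dSeq L (k-1) (b+k) = 0 := by
      rw [dSeq, exNum_empty L hL (by omega)]
      simp
    have := piV_le_dSeq L (k' := k-1) (n₁ := b+k) (n := b+k) le_rfl
    rw [h0] at this
    rw [hπdef] at hcon
    linarith
  set ε := (π - a)/2 with hεdef
  have hε : 0 < ε := by rw [hεdef]; linarith
  set β := a + ε with hβdef
  have hπ1 : π ≤ 1 := piV_le_one L (by omega)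
  have hβ1 : β < 1 := by rw [hβdef, hεdef]; linarith
  have hβπ : β ≤ π := by rw [hβdef, hεdef]; linarith
  have hβ0 : 0 < β := by rw [hβdef]; linarith
  obtain ⟨ε', hε', n₀, hΛ⟩ := ha.2 ε hε
  obtain ⟨c, hc⟩ := exists_nat_ge (((k:ℝ) - 1)/(1 - β))
  set M := max n₀ (b + k + c) with hMdef
  have hMn₀ : n₀ ≤ M := le_max_left _ _
  have hMb : b ≤ M := by have := le_max_right n₀ (b + k + c); omega
  have hMk : k ≤ M := by have := le_max_right n₀ (b + k + c); omega
  have hMc : k + c ≤ M := by have := le_max_right n₀ (b + k + c); omega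
  have hMbk : b + k ≤ M + 1 := by have := le_max_right n₀ (b + k + c); omega
  -- the extremal link-free graph on Fin (M+1), pushed into Fin (M+2) avoiding 0
  obtain ⟨B, hBu, hBfree, hBcard⟩ := exNum_witness L (n := M + 1) (k' := k - 1) hL
  set D : Finset (Finset (Fin (M+2))) := B.image (fun e => e.image Fin.succ) with hDdef
  have hsuccinj : Function.Injective (Fin.succ : Fin (M+1) → Fin (M+2)) :=
    Fin.succ_injective _
  have hDcard : D.card = exNum (M+1) (k-1) L := by
    rw [hDdef, card_image_of_injective _ (Finset.image_injective hsuccinj), hBcard]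
  have hD : ∀ e' ∈ D, (0 : Fin (M+2)) ∉ e' ∧ e'.card = k - 1 := by
    intro e' he'
    rw [hDdef, mem_image] at he'
    obtain ⟨e0, he0, rfl⟩ := he'
    constructor
    · rintro h0
      rw [mem_image] at h0
      obtain ⟨x, -, hx⟩ := h0
      exact Fin.succ_ne_zero x hx
    · rw [card_image_of_injective _ hsuccinj, hBu e0 he0]
  set H : Finset (Finset (Fin (M+2))) :=
    (allEdges (M+2) k).filter (fun e => (0 : Fin (M+2)) ∉ e ∨ e.erase 0 ∈ D) with hHdef
  have hHu : ∀ e ∈ H, e.card = k := by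
    intro e he
    rw [hHdef, mem_filter, allEdges, mem_powersetCard] at he
    exact he.1.2
  -- degree at 0
  have hdeg0 : degH H 0 = exNum (M+1) (k-1) L := by
    rw [← hDcard, degH]
    apply card_bij (fun e _ => e.erase 0)
    · intro e he
      rw [mem_filter, hHdef, mem_filter] at he
      rcases he.1.2 with h | h
      · exact absurd he.2 h
      · exact h
    · intro e1 h1 e2 h2 h12
      rw [mem_filter] at h1 h2
      rw [← insert_erase h1.2, h12, insert_erase h2.2]
    · intro e' he'
      obtain ⟨h0, hcard⟩ := hD e' he'
      refine ⟨insert 0 e', ?_, erase_insert h0⟩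
      rw [mem_filter, hHdef, mem_filter, allEdges, mem_powersetCard]
      refine ⟨⟨⟨subset_univ _, ?_⟩, Or.inr ?_⟩, mem_insert_self _ _⟩
      · rw [card_insert_of_notMem h0, hcard]; omega
      · rwa [erase_insert h0]
  -- degree at u ≠ 0
  have hdegu : ∀ u : Fin (M+2), u ≠ 0 → M.choose (k-1) ≤ degH H u := by
    intro u hu0
    have hu0' : u ∈ (univ : Finset (Fin (M+2))).erase 0 := mem_erase.2 ⟨hu0, mem_univ u⟩
    have hucard : (((univ : Finset (Fin (M+2))).erase 0).erase u).card = M := by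
      rw [card_erase_of_mem hu0', card_erase_of_mem (mem_univ 0)]
      simp [Fintype.card_fin]
    have hle := card_le_card_of_injOn (f := fun s => insert u s)
      (s := (((univ : Finset (Fin (M+2))).erase 0).erase u).powersetCard (k-1))
      (t := H.filter (fun e => u ∈ e)) ?_ ?_
    · rw [card_powersetCard, hucard] at hle
      exact hle
    · intro s hs
      rw [mem_coe, mem_powersetCard] at hs
      simp only [mem_coe]
      have hus : u ∉ s := fun h => (mem_erase.1 (hs.1 h)).1 rfl
      have h0s : (0 : Fin (M+2)) ∉ s := fun h => (mem_erase.1 (mem_of_mem_erase (hs.1 h))).1 rfl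
      rw [mem_filter, hHdef, mem_filter, allEdges, mem_powersetCard]
      refine ⟨⟨⟨subset_univ _, ?_⟩, Or.inl ?_⟩, mem_insert_self _ _⟩
      · rw [card_insert_of_notMem hus, hs.2]; omega
      · rw [mem_insert]
        push_neg
        exact ⟨Ne.symm hu0, h0s⟩
    · intro s1 h1 s2 h2 h12
      rw [mem_coe, mem_powersetCard] at h1 h2
      have hus1 : u ∉ s1 := fun h => (mem_erase.1 (h1.1 h)).1 rfl
      have hus2 : u ∉ s2 := fun h => (mem_erase.1 (h2.1 h)).1 rfl
      have h12' : insert u s1 = insert u s2 := h12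
      rw [← erase_insert hus1, h12', erase_insert hus2]
  -- no embeddings at 0
  have hemb : embCount k b F v H 0 = 0 := by
    rw [embCount, card_eq_zero, eq_empty_iff_forall_notMem]
    intro f hf
    simp only [mem_filter, mem_univ, true_and] at hf
    obtain ⟨hfi, hfv, hfe⟩ := hf
    -- all link edges of f land in D
    have hlink : ∀ e' ∈ L, e'.image f ∈ D := by
      intro e' he'
      have he'' := he'
      rw [hLdef, linkAt, mem_image] at he''
      obtain ⟨e, he, rfl⟩ := he''
      rw [mem_filter] at he
      have himg := hfe e he.1 he.2
      obtain ⟨heq, hnot⟩ := image_of_mem_link hfi he.2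
      rw [hfv] at heq hnot
      rw [hHdef, mem_filter] at himg
      rcases himg.2 with h | h
      · refine absurd ?_ h
        rw [heq]
        exact mem_insert_self 0 _
      · rwa [heq, erase_insert hnot] at h
    -- replace v by a fresh vertex
    have hbM : ((univ : Finset (Fin b)).image f).card < (univ : Finset (Fin (M+2))).card := by
      rw [card_image_of_injective _ hfi]
      simp only [card_univ, Fintype.card_fin]
      omega
    obtain ⟨y, hy⟩ : ∃ y : Fin (M+2), y ∉ (univ : Finset (Fin b)).image f := by
      by_contra hcon2
      push_neg at hcon2
      exact absurd (card_le_card (fun x _ => hcon2 x)) (not_le.2 hbM)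
    have hyv : ∀ x, f x ≠ y := fun x h => hy (mem_image.2 ⟨x, mem_univ x, h⟩)
    set f' := Function.update f v y with hf'def
    have hf'i : Function.Injective f' := by
      intro x1 x2 h12
      rw [hf'def] at h12
      by_cases h1 : x1 = v <;> by_cases h2 : x2 = v
      · rw [h1, h2]
      · rw [h1] at h12 ⊢
        rw [Function.update_self, Function.update_of_ne h2] at h12
        exact absurd h12.symm (hyv x2)
      · rw [h2] at h12 ⊢
        rw [Function.update_self, Function.update_of_ne h1] at h12
        exact absurd h12 (hyv x1)
      · rw [Function.update_of_ne h1, Function.update_of_ne h2] at h12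
        exact hfi h12
    have hf'ne0 : ∀ x, f' x ≠ 0 := by
      intro x
      by_cases hxv : x = v
      · rw [hxv, hf'def, Function.update_self]
        intro h
        exact hyv v (by rw [hfv, h])
      · rw [hf'def, Function.update_of_ne hxv]
        intro h
        exact hxv (hfi (h.trans hfv.symm))
    have hedges : ∀ e' ∈ L, ∃ e0 ∈ B, e'.image f' = e0.image Fin.succ := by
      intro e' he'
      have hv' : v ∉ e' := (linkAt_card hF e' he').2
      have heq : e'.image f' = e'.image f := by
        apply image_congr
        intro x hx
        rw [hf'def, Function.update_of_ne (fun h => hv' (by rw [← h]; exact hx))]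
      have := hlink e' he'
      rw [hDdef, mem_image] at this
      obtain ⟨e0, he0, heq0⟩ := this
      exact ⟨e0, he0, by rw [heq, heq0]⟩
    have hrange : ∀ x, ∃ z : Fin (M+1), Fin.succ z = f' x :=
      fun x => Fin.exists_succ_eq_of_ne_zero (hf'ne0 x)
    obtain ⟨g, hgi, hge⟩ := copy_pull L hsuccinj (H' := B) hf'i hrange hedges
    exact hBfree ⟨g, hgi, hge⟩
  -- assemble the contradiction
  have hchoosepos : (0:ℝ) < ((M+1).choose (k-1) : ℝ) := by
    exact_mod_cast Nat.choose_pos (by omega)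
  have h21 : M + 2 - 1 = M + 1 := by omega
  have hdegcond : ∀ u : Fin (M+2),
      (a + ε) * (((M+2-1).choose (k-1) : ℕ) : ℝ) ≤ (degH H u : ℝ) := by
    intro u
    rw [h21]
    by_cases hu0 : u = 0
    · rw [hu0, hdeg0]
      have hπd : π ≤ dSeq L (k-1) (M+1) := piV_le_dSeq L hMbk
      have hds : dSeq L (k-1) (M+1) * ((M+1).choose (k-1):ℝ) = (exNum (M+1) (k-1) L : ℝ) := by
        rw [dSeq, div_mul_cancel₀]
        exact ne_of_gt hchoosepos
      have : β * ((M+1).choose (k-1):ℝ) ≤ dSeq L (k-1) (M+1) * ((M+1).choose (k-1):ℝ) := by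
        apply mul_le_mul_of_nonneg_right (hβπ.trans hπd) hchoosepos.le
      rw [hds] at this
      exact this
    · have h1 : (M.choose (k-1) : ℝ) ≤ (degH H u : ℝ) := by exact_mod_cast hdegu u hu0
      have hks : k - 1 = (k - 2) + 1 := by omega
      set s := k - 2 with hsdef
      have hpascal : (M+1).choose (s+1) = M.choose s + M.choose (s+1) :=
        Nat.choose_succ_succ' M s
      have hid0 : M.choose (s+1) * (s+1) = M.choose s * (M - s) :=
        Nat.choose_succ_right_eq M s
      have hsM : s ≤ M := by omega
      set c1 : ℝ := (M.choose (s+1) : ℝ) with hc1def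
      set c2 : ℝ := (M.choose s : ℝ) with hc2def
      have hid : c1 * ((s:ℝ)+1) = c2 * ((M:ℝ) - (s:ℝ)) := by
        rw [hc1def, hc2def]
        have := congrArg (fun t : ℕ => (t : ℝ)) hid0
        push_cast [Nat.cast_sub hsM] at this
        convert this using 2 <;> push_cast <;> ring
      have hMs : (0:ℝ) < (M:ℝ) - (s:ℝ) := by
        have : (s:ℝ) < (M:ℝ) := by exact_mod_cast lt_of_lt_of_le (by omega : s < k) hMk
        linarith
      have hkey : ((s:ℝ)+1) ≤ (1-β) * ((M:ℝ) - (s:ℝ)) := by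
        have hcM : (c:ℝ) ≤ (M:ℝ) - (s:ℝ) := by
          have : (c:ℝ) + (s:ℝ) ≤ (M:ℝ) := by exact_mod_cast (by omega : c + s ≤ M)
          linarith
        have hks' : ((k:ℝ) - 1) = (s:ℝ) + 1 := by
          have : (k:ℕ) = s + 2 := by omega
          rw [this]; push_cast; ring
        have h1β : (0:ℝ) < 1 - β := by linarith
        rw [div_le_iff₀ h1β] at hc
        calc ((s:ℝ)+1) = (k:ℝ) - 1 := hks'.symm
          _ ≤ (1-β) * (c:ℝ) := by linarith [hc]
          _ ≤ (1-β) * ((M:ℝ) - (s:ℝ)) := by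
              apply mul_le_mul_of_nonneg_left hcM h1β.le
      have hc1 : (0:ℝ) ≤ c1 := by rw [hc1def]; positivity
      have hc2 : (0:ℝ) ≤ c2 := by rw [hc2def]; positivity
      have hgoal : β * (c2 + c1) ≤ c1 := by
        nlinarith [mul_le_mul_of_nonneg_left hkey (mul_nonneg hβ0.le hc1),
          mul_le_mul_of_nonneg_right hβ1.le (mul_nonneg hc1 hMs.le), hid,
          mul_nonneg hc2 hMs.le]
      have hcast : (((M+1).choose (k-1) : ℕ) : ℝ) = c2 + c1 := by
        rw [hks, hpascal]; push_cast [hc1def, hc2def]; ring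
      calc (a + ε) * (((M+1).choose (k-1) : ℕ) : ℝ) = β * (c2 + c1) := by
            rw [hcast, hβdef]
        _ ≤ c1 := hgoal
        _ = (M.choose (k-1) : ℝ) := by rw [hc1def, hks]
        _ ≤ (degH H u : ℝ) := h1
  have hfinal := hΛ (M+2) (by omega) H hHu hdegcond 0
  rw [hemb] at hfinal
  have hpos : (0:ℝ) < ε' * ((M+2 : ℕ) : ℝ)^(b-1) := by positivity
  rw [Nat.cast_zero] at hfinal
  linarith

end AFabE
namespace AFabF
open Finset Filter Topology AFab AFabD AFabE

lemma upper_bound {k b : ℕ} (hk : 2 ≤ k) (hb : 0 < b) (F : Finset (Finset (Fin b)))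
    (hF : ∀ e ∈ F, e.card = k) (v : Fin b) {a : ℝ}
    (hπa : piV (linkAt F v) (k-1) (b + k) < a) : a ∈ LambdaSet k b F v := by
  classical
  set L := linkAt F v with hLdef
  set π := piV L (k-1) (b + k) with hπdef
  have hπ0 : 0 ≤ π := piV_nonneg L _ _
  have ha0 : 0 < a := lt_of_le_of_lt hπ0 hπa
  refine ⟨ha0, ?_⟩
  intro ε hε
  obtain ⟨m, hm₁, hmlt⟩ := exists_dSeq_lt L (k' := k-1) (n₁ := b+k) (δ := ε/2) (by positivity)
  have hmb : b ≤ m := by omega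
  have hmk : k - 1 ≤ m := by omega
  have hCmb : 0 < m.choose b := Nat.choose_pos hmb
  have hCmk : 0 < m.choose (k-1) := Nat.choose_pos hmk
  set ε' := ε / (2 * 2^b * (m.choose b) * (b.factorial)) with hε'def
  have hε'0 : 0 < ε' := by
    rw [hε'def]
    have h1 : (0:ℝ) < (m.choose b : ℝ) := by exact_mod_cast hCmb
    have h2 : (0:ℝ) < (b.factorial : ℝ) := by exact_mod_cast b.factorial_pos
    positivity
  refine ⟨ε', hε'0, m + 2*b + k + 2, ?_⟩
  intro n hn H hHu hdeg w
  have hnm : m + 1 ≤ n := by omega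
  have hn2b : 2 * b ≤ n := by omega
  have hnk : k ≤ n := by omega
  have hn0 : 0 < n := by omega
  set U := (univ : Finset (Fin n)).erase w with hUdef
  have hUcard : U.card = n - 1 := by
    rw [hUdef, card_erase_of_mem (mem_univ w), card_univ, Fintype.card_fin]
  set G := (U.powersetCard (k-1)).filter (fun e' => insert w e' ∈ H) with hGdef
  have hGprop : ∀ e' ∈ G, e'.card = k - 1 ∧ e' ⊆ U ∧ insert w e' ∈ H := by
    intro e' he'
    rw [hGdef, mem_filter, mem_powersetCard] at he'
    exact ⟨he'.1.2, he'.1.1, he'.2⟩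
  -- G is the link of w, so it is large
  have hGcard : G.card = degH H w := by
    rw [degH]
    apply card_bij (fun e' _ => insert w e')
    · intro e' he'
      obtain ⟨h1, h2, h3⟩ := hGprop e' he'
      exact mem_filter.2 ⟨h3, mem_insert_self _ _⟩
    · intro e1 h1 e2 h2 h12
      have h12' : insert w e1 = insert w e2 := h12
      have hw1 : w ∉ e1 := fun h => (mem_erase.1 ((hGprop e1 h1).2.1 h)).1 rfl
      have hw2 : w ∉ e2 := fun h => (mem_erase.1 ((hGprop e2 h2).2.1 h)).1 rfl
      rw [← erase_insert hw1, h12', erase_insert hw2]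
    · intro e he
      rw [mem_filter] at he
      refine ⟨e.erase w, ?_, insert_erase he.2⟩
      rw [hGdef, mem_filter, mem_powersetCard]
      refine ⟨⟨fun x hx => mem_erase.2 ⟨(mem_erase.1 hx).1, mem_univ x⟩, ?_⟩, ?_⟩
      · rw [card_erase_of_mem he.2, hHu e he.1]
      · rw [insert_erase he.2]; exact he.1
  have hGlow : (π + ε) * (((n-1).choose (k-1) : ℕ) : ℝ) ≤ (G.card : ℝ) := by
    rw [hGcard]
    calc (π + ε) * (((n-1).choose (k-1) : ℕ) : ℝ)
        ≤ (a + ε) * (((n-1).choose (k-1) : ℕ) : ℝ) := by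
          apply mul_le_mul_of_nonneg_right (by linarith) (by positivity)
      _ ≤ (degH H w : ℝ) := hdeg w
  -- the family of m-sets with many link edges
  set 𝒢 := (U.powersetCard m).filter
      (fun S => exNum m (k-1) L < (G.filter (fun e => e ⊆ S)).card) with h𝒢def
  -- double counting
  have hsum : ∑ S ∈ U.powersetCard m, (G.filter (fun e => e ⊆ S)).card
      = G.card * ((U.card - (k-1)).choose (m - (k-1))) :=
    sum_card_subgraphs (fun e he => ⟨(hGprop e he).1, (hGprop e he).2.1⟩) hmk
  have hsum_le : G.card * ((U.card - (k-1)).choose (m - (k-1)))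
      ≤ 𝒢.card * (m.choose (k-1)) + ((n-1).choose m) * exNum m (k-1) L := by
    rw [← hsum]
    have hsplit := sum_filter_add_sum_filter_not (U.powersetCard m)
      (fun S => exNum m (k-1) L < (G.filter (fun e => e ⊆ S)).card)
      (fun S => (G.filter (fun e => e ⊆ S)).card)
    rw [← hsplit]
    have hb1 : ∑ S ∈ 𝒢, (G.filter (fun e => e ⊆ S)).card ≤ 𝒢.card * (m.choose (k-1)) := by
      have hbnd := sum_le_card_nsmul 𝒢 (fun S => (G.filter (fun e => e ⊆ S)).card)
        (m.choose (k-1)) ?_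
      · simpa [smul_eq_mul] using hbnd
      · intro S hS
        rw [h𝒢def, mem_filter, mem_powersetCard] at hS
        have hcle := card_le_choose (k' := k-1) (U := S) (H' := G.filter (fun e => e ⊆ S)) ?_
        · rwa [hS.1.2] at hcle
        · intro e he
          rw [mem_filter] at he
          exact ⟨(hGprop e he.1).1, he.2⟩
    have hb2 : ∑ S ∈ (U.powersetCard m).filter
        (fun S => ¬ exNum m (k-1) L < (G.filter (fun e => e ⊆ S)).card),
        (G.filter (fun e => e ⊆ S)).card ≤ ((n-1).choose m) * exNum m (k-1) L := by
      calc _ ≤ ∑ _S ∈ (U.powersetCard m).filter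
            (fun S => ¬ exNum m (k-1) L < (G.filter (fun e => e ⊆ S)).card),
            exNum m (k-1) L := by
            apply sum_le_sum
            intro S hS
            rw [mem_filter, not_lt] at hS
            exact hS.2
        _ = ((U.powersetCard m).filter
            (fun S => ¬ exNum m (k-1) L < (G.filter (fun e => e ⊆ S)).card)).card
              * exNum m (k-1) L := by rw [sum_const, smul_eq_mul]
        _ ≤ ((n-1).choose m) * exNum m (k-1) L := by
            apply Nat.mul_le_mul_right
            calc _ ≤ (U.powersetCard m).card := card_le_card (filter_subset _ _)
              _ = (n-1).choose m := by rw [card_powersetCard, hUcard]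
    exact Nat.add_le_add hb1 hb2
  -- conclude 𝒢 is large
  have hexm : (exNum m (k-1) L : ℝ) ≤ (π + ε/2) * ((m.choose (k-1) : ℕ) : ℝ) := by
    have hq : (0:ℝ) < ((m.choose (k-1) : ℕ) : ℝ) := by exact_mod_cast hCmk
    have hthis := hmlt
    rw [← hπdef, dSeq, div_lt_iff₀ hq] at hthis
    linarith
  have hid : (((n-1).choose m : ℕ) : ℝ) * ((m.choose (k-1) : ℕ) : ℝ)
      = (((n-1).choose (k-1) : ℕ) : ℝ) * (((n-1-(k-1)).choose (m-(k-1)) : ℕ) : ℝ) := by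
    exact_mod_cast Nat.choose_mul hmk
  have h𝒢 : (ε/2) * (((n-1).choose m : ℕ) : ℝ) ≤ (𝒢.card : ℝ) := by
    have hQ1pos : (0:ℝ) < ((m.choose (k-1) : ℕ) : ℝ) := by exact_mod_cast hCmk
    have hP2nn : (0:ℝ) ≤ (((n-1-(k-1)).choose (m-(k-1)) : ℕ) : ℝ) := by positivity
    have hQ2nn : (0:ℝ) ≤ (((n-1).choose m : ℕ) : ℝ) := by positivity
    have hUc : U.card - (k-1) = n - 1 - (k-1) := by rw [hUcard]
    rw [hUc] at hsum_le
    have c2 : (G.card : ℝ) * (((n-1-(k-1)).choose (m-(k-1)) : ℕ) : ℝ)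
        ≤ (𝒢.card : ℝ) * ((m.choose (k-1) : ℕ) : ℝ)
          + (((n-1).choose m : ℕ) : ℝ) * (exNum m (k-1) L : ℝ) := by
      exact_mod_cast hsum_le
    have c4 : ((π + ε) * (((n-1).choose (k-1) : ℕ) : ℝ)) * (((n-1-(k-1)).choose (m-(k-1)) : ℕ) : ℝ)
        ≤ (G.card : ℝ) * (((n-1-(k-1)).choose (m-(k-1)) : ℕ) : ℝ) :=
      mul_le_mul_of_nonneg_right hGlow hP2nn
    have c5 : (((n-1).choose m : ℕ) : ℝ) * (exNum m (k-1) L : ℝ)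
        ≤ (((n-1).choose m : ℕ) : ℝ) * ((π + ε/2) * ((m.choose (k-1) : ℕ) : ℝ)) :=
      mul_le_mul_of_nonneg_left hexm hQ2nn
    have e1 : (π + ε) * ((((n-1).choose m : ℕ) : ℝ) * ((m.choose (k-1) : ℕ) : ℝ))
        ≤ (G.card : ℝ) * (((n-1-(k-1)).choose (m-(k-1)) : ℕ) : ℝ) := by
      calc (π + ε) * ((((n-1).choose m : ℕ) : ℝ) * ((m.choose (k-1) : ℕ) : ℝ))
          = ((π + ε) * (((n-1).choose (k-1) : ℕ) : ℝ))
            * (((n-1-(k-1)).choose (m-(k-1)) : ℕ) : ℝ) := by rw [hid]; ring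
        _ ≤ _ := c4
    have hmain : (ε/2) * (((n-1).choose m : ℕ) : ℝ) * ((m.choose (k-1) : ℕ) : ℝ)
        ≤ (𝒢.card : ℝ) * ((m.choose (k-1) : ℕ) : ℝ) := by linarith
    exact le_of_mul_le_mul_right hmain hQ1pos
  -- extract copies
  have hcopy : ∀ S ∈ 𝒢, ∃ g : Fin b → Fin n, Function.Injective g ∧ (∀ x, g x ∈ S) ∧
      ∀ e' ∈ L, e'.image g ∈ G := by
    intro S hS
    rw [h𝒢def, mem_filter, mem_powersetCard] at hS
    obtain ⟨⟨hSU, hScard⟩, hSbig⟩ := hS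
    set iso := S.orderIsoOfFin hScard with hisodef
    set up : Fin m → Fin n := fun i => (iso i : Fin n) with hupdef
    have hupinj : Function.Injective up := by
      intro i j hij
      exact iso.injective (Subtype.ext hij)
    have hupS : ∀ i, up i ∈ S := fun i => (iso i).2
    have hm0 : 0 < m := by omega
    set down : Fin n → Fin m := fun x => if h : x ∈ S then iso.symm ⟨x, h⟩ else ⟨0, hm0⟩
      with hdowndef
    have hud : ∀ x ∈ S, up (down x) = x := by
      intro x hx
      rw [hdowndef, hupdef]
      simp only [dif_pos hx]
      rw [OrderIso.apply_symm_apply]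
    set GS := (G.filter (fun e => e ⊆ S)).image (fun e => e.image down) with hGSdef
    have himgback : ∀ e ∈ G.filter (fun e => e ⊆ S), (e.image down).image up = e := by
      intro e he
      rw [mem_filter] at he
      rw [image_image]
      calc e.image (up ∘ down) = e.image id := image_congr (fun x hx => hud x (he.2 hx))
        _ = e := image_id
    have hGSu : ∀ e ∈ GS, e.card = k - 1 := by
      intro e he
      rw [hGSdef, mem_image] at he
      obtain ⟨e0, he0, rfl⟩ := he
      calc (e0.image down).card = ((e0.image down).image up).card :=
            (card_image_of_injective _ hupinj).symm
        _ = e0.card := by rw [himgback e0 he0]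
        _ = k - 1 := (hGprop e0 (mem_filter.1 he0).1).1
    have hGScard : GS.card = (G.filter (fun e => e ⊆ S)).card := by
      rw [hGSdef]
      apply card_image_of_injOn
      intro e1 h1 e2 h2 h12
      rw [mem_coe] at h1 h2
      have h12' : e1.image down = e2.image down := h12
      rw [← himgback e1 h1, ← himgback e2 h2, h12']
    obtain ⟨f, hfi, hfe⟩ := exists_copy L hGSu (by rw [hGScard]; exact hSbig)
    refine ⟨up ∘ f, hupinj.comp hfi, fun x => hupS _, ?_⟩
    intro e' he'
    have := hfe e' he'
    rw [hGSdef, mem_image] at this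
    obtain ⟨e0, he0, heq⟩ := this
    have heq' : e0.image down = e'.image f := heq
    have himgeq : e'.image (up ∘ f) = e0 := by
      rw [← image_image, ← heq', himgback e0 he0]
    rw [himgeq]
    exact (mem_filter.1 he0).1
  -- the set of labelled copies of the link in the link of w
  set T := (univ : Finset (Fin b → Fin n)).filter
      (fun g => Function.Injective g ∧ (∀ x, g x ≠ w) ∧ ∀ e' ∈ L, e'.image g ∈ G) with hTdef
  have hT1 : 𝒢.card ≤ T.card * ((n-1-b).choose (m-b)) := by
    have hsub : 𝒢 ⊆ T.biUnion (fun g => (U.powersetCard m).filter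
        (fun S => (univ : Finset (Fin b)).image g ⊆ S)) := by
      intro S hS
      obtain ⟨g, hgi, hgS, hge⟩ := hcopy S hS
      rw [h𝒢def, mem_filter] at hS
      rw [mem_biUnion]
      have hSU : S ⊆ U := (mem_powersetCard.1 hS.1).1
      refine ⟨g, ?_, ?_⟩
      · rw [hTdef, mem_filter]
        exact ⟨mem_univ _, hgi, fun x => (mem_erase.1 (hSU (hgS x))).1, hge⟩
      · rw [mem_filter]
        refine ⟨hS.1, ?_⟩
        intro y hy
        rw [mem_image] at hy
        obtain ⟨x, -, rfl⟩ := hy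
        exact hgS x
    calc 𝒢.card ≤ (T.biUnion (fun g => (U.powersetCard m).filter
          (fun S => (univ : Finset (Fin b)).image g ⊆ S))).card := card_le_card hsub
      _ ≤ ∑ g ∈ T, ((U.powersetCard m).filter
          (fun S => (univ : Finset (Fin b)).image g ⊆ S)).card := card_biUnion_le
      _ ≤ ∑ _g ∈ T, (n-1-b).choose (m-b) := by
          apply sum_le_sum
          intro g hg
          rw [hTdef, mem_filter] at hg
          have hcard : ((univ : Finset (Fin b)).image g).card = b := by
            rw [card_image_of_injective _ hg.2.1, card_univ, Fintype.card_fin]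
          have := card_supersets_le U ((univ : Finset (Fin b)).image g) m
          rwa [hcard, hUcard] at this
      _ = T.card * (n-1-b).choose (m-b) := by rw [sum_const, smul_eq_mul]
  -- convert copies to embeddings
  set Emb := @Finset.filter _
      (fun f : Fin b → Fin n => Function.Injective f ∧ f v = w ∧
        ∀ e ∈ F, v ∈ e → e.image f ∈ H)
      (fun f => Classical.propDecidable _) (univ : Finset (Fin b → Fin n)) with hEmbdef
  have hEmbCount : embCount k b F v H w = Emb.card := rfl
  set cv : (Fin b → Fin n) → (Fin b → Fin n) := fun g => Function.update g v w with hcvdef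
  have hTEmbmem : ∀ g ∈ T, cv g ∈ Emb := by
    intro g hg
    rw [hTdef, mem_filter] at hg
    obtain ⟨-, hgi, hgw, hge⟩ := hg
    have hcvi : Function.Injective (cv g) := by
      intro x1 x2 h12
      have h12' : Function.update g v w x1 = Function.update g v w x2 := h12
      by_cases h1 : x1 = v <;> by_cases h2 : x2 = v
      · rw [h1, h2]
      · rw [h1] at h12' ⊢
        rw [Function.update_self, Function.update_of_ne h2] at h12'
        exact absurd h12'.symm (hgw x2)
      · rw [h2] at h12' ⊢
        rw [Function.update_self, Function.update_of_ne h1] at h12'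
        exact absurd h12' (hgw x1)
      · rw [Function.update_of_ne h1, Function.update_of_ne h2] at h12'
        exact hgi h12'
    have hcvv : cv g v = w := Function.update_self v w g
    rw [hEmbdef]
    simp only [mem_filter, mem_univ, true_and]
    refine ⟨hcvi, hcvv, ?_⟩
    intro e he hv
    obtain ⟨heq, -⟩ := image_of_mem_link hcvi hv
    rw [hcvv] at heq
    have hL' : e.erase v ∈ L := by
      rw [hLdef, linkAt, mem_image]
      exact ⟨e, mem_filter.2 ⟨he, hv⟩, rfl⟩
    have himg : (e.erase v).image (cv g) = (e.erase v).image g := by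
      apply image_congr
      intro x hx
      rw [hcvdef]
      exact Function.update_of_ne (mem_erase.1 hx).1 w g
    rw [heq, himg]
    exact (hGprop _ (hge _ hL')).2.2
  have hTEmb : T.card ≤ Emb.card * n := by
    calc T.card = ∑ h ∈ T.image cv, (T.filter (fun g => cv g = h)).card :=
          card_eq_sum_card_image cv T
      _ ≤ ∑ _h ∈ T.image cv, n := by
          apply sum_le_sum
          intro h hh
          have := card_le_card_of_injOn (f := fun g => g v)
            (s := T.filter (fun g => cv g = h)) (t := (univ : Finset (Fin n)))
            (fun g _ => mem_univ _) ?_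
          · simpa using this
          · intro g1 hg1 g2 hg2 h12
            rw [mem_coe, mem_filter] at hg1 hg2
            funext x
            by_cases hx : x = v
            · rw [hx]; exact h12
            · have e1 : cv g1 x = g1 x := Function.update_of_ne hx w g1
              have e2 : cv g2 x = g2 x := Function.update_of_ne hx w g2
              rw [← e1, ← e2, hg1.2, hg2.2]
      _ = (T.image cv).card * n := by rw [sum_const, smul_eq_mul]
      _ ≤ Emb.card * n := by
          apply Nat.mul_le_mul_right
          apply card_le_card
          intro h hh
          rw [mem_image] at hh
          obtain ⟨g, hg, rfl⟩ := hh
          exact hTEmbmem g hg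
  -- the purely arithmetic finish
  have hnatkey : n^b * ((n-1-b).choose (m-b)) ≤ 2^b * b.factorial *
      (((n-1).choose m) * (m.choose b)) := by
    have h1 : n ≤ 2 * (n - b) := by omega
    have h2 : n^b ≤ (2 * (n-b))^b := Nat.pow_le_pow_left h1 b
    have h3 : (2 * (n-b))^b = 2^b * (n-b)^b := mul_pow 2 (n-b) b
    have h4 : (n-b)^b ≤ (n-1).descFactorial b := by
      have : n - b = (n-1) + 1 - b := by omega
      rw [this]
      exact Nat.pow_sub_le_descFactorial (n-1) b
    have h5 : (n-1).descFactorial b = b.factorial * ((n-1).choose b) :=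
      Nat.descFactorial_eq_factorial_mul_choose (n-1) b
    have h6 : (n-1).choose m * (m.choose b) = (n-1).choose b * ((n-1-b).choose (m-b)) :=
      Nat.choose_mul hmb
    calc n^b * ((n-1-b).choose (m-b)) ≤ (2^b * (n-b)^b) * ((n-1-b).choose (m-b)) := by
          apply Nat.mul_le_mul_right
          rw [← h3]; exact h2
      _ ≤ (2^b * (b.factorial * ((n-1).choose b))) * ((n-1-b).choose (m-b)) := by
          apply Nat.mul_le_mul_right
          apply Nat.mul_le_mul_left
          rw [← h5]; exact h4
      _ = 2^b * b.factorial * (((n-1).choose b) * ((n-1-b).choose (m-b))) := by ring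
      _ = 2^b * b.factorial * (((n-1).choose m) * (m.choose b)) := by rw [← h6]
  -- cast everything and finish
  rw [hEmbCount]
  have hC'pos : (0:ℝ) < (((n-1-b).choose (m-b) : ℕ) : ℝ) := by
    exact_mod_cast Nat.choose_pos (by omega : m - b ≤ n - 1 - b)
  have hnpos : (0:ℝ) < (n:ℝ) := by exact_mod_cast hn0
  have hT1R : (𝒢.card : ℝ) ≤ (T.card : ℝ) * (((n-1-b).choose (m-b) : ℕ) : ℝ) := by
    exact_mod_cast hT1
  have hTEmbR : (T.card : ℝ) ≤ (Emb.card : ℝ) * (n : ℝ) := by exact_mod_cast hTEmb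
  have hchain : (ε/2) * (((n-1).choose m : ℕ) : ℝ)
      ≤ (Emb.card : ℝ) * ((n:ℝ) * (((n-1-b).choose (m-b) : ℕ) : ℝ)) := by
    calc (ε/2) * (((n-1).choose m : ℕ) : ℝ) ≤ (𝒢.card : ℝ) := h𝒢
      _ ≤ (T.card : ℝ) * (((n-1-b).choose (m-b) : ℕ) : ℝ) := hT1R
      _ ≤ ((Emb.card : ℝ) * (n : ℝ)) * (((n-1-b).choose (m-b) : ℕ) : ℝ) :=
          mul_le_mul_of_nonneg_right hTEmbR hC'pos.le
      _ = (Emb.card : ℝ) * ((n:ℝ) * (((n-1-b).choose (m-b) : ℕ) : ℝ)) := by ring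
  have hfact : (0:ℝ) < (b.factorial : ℝ) := by exact_mod_cast b.factorial_pos
  have hCmbR : (0:ℝ) < ((m.choose b : ℕ) : ℝ) := by exact_mod_cast hCmb
  have h2 : ε' * (2^b * ((m.choose b : ℕ) : ℝ) * (b.factorial : ℝ)) = ε/2 := by
    rw [hε'def]
    field_simp
  have hkey2 : ε' * ((n:ℝ)^b * (((n-1-b).choose (m-b) : ℕ) : ℝ))
      ≤ (ε/2) * (((n-1).choose m : ℕ) : ℝ) := by
    have hcast : (n:ℝ)^b * (((n-1-b).choose (m-b) : ℕ) : ℝ) ≤ 2^b * (b.factorial : ℝ) *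
        ((((n-1).choose m : ℕ) : ℝ) * ((m.choose b : ℕ) : ℝ)) := by
      exact_mod_cast hnatkey
    calc ε' * ((n:ℝ)^b * (((n-1-b).choose (m-b) : ℕ) : ℝ))
        ≤ ε' * (2^b * (b.factorial : ℝ) *
          ((((n-1).choose m : ℕ) : ℝ) * ((m.choose b : ℕ) : ℝ))) :=
          mul_le_mul_of_nonneg_left hcast hε'0.le
      _ = (ε' * (2^b * ((m.choose b : ℕ) : ℝ) * (b.factorial : ℝ)))
            * (((n-1).choose m : ℕ) : ℝ) := by ring
      _ = (ε/2) * (((n-1).choose m : ℕ) : ℝ) := by rw [h2]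
  have hpowb : (n:ℝ)^(b-1) * (n:ℝ) = (n:ℝ)^b := by
    rw [← pow_succ]
    congr 1
    omega
  have hfin : ε' * (n:ℝ)^(b-1) * ((n:ℝ) * (((n-1-b).choose (m-b) : ℕ) : ℝ))
      ≤ (Emb.card : ℝ) * ((n:ℝ) * (((n-1-b).choose (m-b) : ℕ) : ℝ)) := by
    calc ε' * (n:ℝ)^(b-1) * ((n:ℝ) * (((n-1-b).choose (m-b) : ℕ) : ℝ))
        = ε' * ((n:ℝ)^b * (((n-1-b).choose (m-b) : ℕ) : ℝ)) := by
          rw [← hpowb]; ring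
      _ ≤ (ε/2) * (((n-1).choose m : ℕ) : ℝ) := hkey2
      _ ≤ (Emb.card : ℝ) * ((n:ℝ) * (((n-1-b).choose (m-b) : ℕ) : ℝ)) := hchain
  exact le_of_mul_le_mul_right hfin (by positivity)

end AFabF
/-- remark in Section 6. For every `k`-graph `F` with at least one
edge, `α_F = min_{v ∈ V(F)} π(F'_v)`, where `F'_v` is the link `(k-1)`-graph of `v` in
`F` and `π` is the Turán density `π(G) = lim_{n→∞} ex(n,G) C(n,k-1)⁻¹`. -/
theorem alphaF_eq_min_turan_density
    (k : ℕ) (hk : 2 ≤ k) (b : ℕ) (hb : 0 < b)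
    (F : Finset (Finset (Fin b))) (hF : ∀ e ∈ F, e.card = k) (hFne : F.Nonempty) :
    ∃ π : Fin b → ℝ,
      (∀ v : Fin b,
        Tendsto
          (fun n : ℕ => (exNum n (k - 1) (linkAt F v) : ℝ) / ((n.choose (k - 1) : ℕ) : ℝ))
          atTop (𝓝 (π v))) ∧
      alphaF k b F = ⨅ v : Fin b, π v := by
  refine ⟨fun v => AFabD.piV (linkAt F v) (k-1) (b+k), fun v => ?_, ?_⟩
  · exact AFabD.tendsto_dSeq (linkAt F v) (k' := k-1) (n₁ := b+k)
      (by omega) (by omega) (by omega)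
  · rw [alphaF]
    apply iInf_congr
    intro v
    -- sInf (LambdaSet k b F v) = piV (linkAt F v) (k-1) (b+k)
    have hub : ∀ {a : ℝ}, AFabD.piV (linkAt F v) (k-1) (b+k) < a → a ∈ LambdaSet k b F v :=
      fun ha => AFabF.upper_bound hk hb F hF v ha
    have hne : (LambdaSet k b F v).Nonempty :=
      ⟨AFabD.piV (linkAt F v) (k-1) (b+k) + 1, hub (by linarith)⟩
    have hbdd : BddBelow (LambdaSet k b F v) := ⟨0, fun a ha => ha.1.le⟩
    apply le_antisymm
    · apply le_of_forall_pos_le_add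
      intro δ hδ
      exact csInf_le hbdd (hub (by linarith))
    · exact le_csInf hne (fun a ha => AFabE.lower_bound hk hb F hF v ha)
end
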